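/- arXiv:2102.08712 — 7 statements merged into one kernel-verified Lean document; each statement's English description precedes it below -/
import Mathlib

section
/- Let l ≥ 1, 1 ≤ q ≤ l-1, and let λ₁,…,λ_{2l} be real numbers. Then Σ_{j=2}^{2l} [ S_{2q}(λ₂,…,λ̂ⱼ,…,λ_{2l})/(2l-2q-1) + λ₁λⱼ S_{2q-2}(λ₂,…,λ̂ⱼ,…,λ_{2l})/(2q-1) ] = S_{2q}(λ₁,…,λ_{2l}), where S_k denotes the elementary symmetric polynomial of degree k. -/
open Finset

/-- The `k`-th elementary symmetric polynomial of the family `v` restricted to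
the index set `s`. -/
def esymmOn {R : Type*} [CommRing R] {ι : Type*} [DecidableEq ι]
    (s : Finset ι) (k : ℕ) (v : ι → R) : R :=
  ∑ t ∈ powersetCard k s, ∏ i ∈ t, v i

lemma aux_swap {ι : Type*} [DecidableEq ι] (s : Finset ι) (k : ℕ)
    (f : ι → Finset ι → ℝ) :
    ∑ j ∈ s, ∑ t ∈ powersetCard k (s.erase j), f j t
      = ∑ t ∈ powersetCard k s, ∑ j ∈ s \ t, f j t := by
  refine Finset.sum_comm' ?_
  intro j t
  simp only [mem_powersetCard, subset_erase, mem_sdiff]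
  tauto

lemma aux_sum_erase {ι : Type*} [DecidableEq ι] (s : Finset ι) (k : ℕ) (v : ι → ℝ) :
    ∑ j ∈ s, esymmOn (s.erase j) k v = ((s.card - k : ℕ) : ℝ) * esymmOn s k v := by
  unfold esymmOn
  rw [aux_swap s k (fun _ t => ∏ i ∈ t, v i), Finset.mul_sum]
  refine Finset.sum_congr rfl fun t ht => ?_
  rw [mem_powersetCard] at ht
  rw [Finset.sum_const, nsmul_eq_mul, Finset.card_sdiff_of_subset ht.1, ht.2]

lemma aux_sum_mul_erase {ι : Type*} [DecidableEq ι] (s : Finset ι) (k : ℕ) (v : ι → ℝ) :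
    ∑ j ∈ s, v j * esymmOn (s.erase j) k v
      = ((k + 1 : ℕ) : ℝ) * esymmOn s (k + 1) v := by
  unfold esymmOn
  simp only [Finset.mul_sum]
  rw [aux_swap s k (fun j t => v j * ∏ i ∈ t, v i)]
  have key : ∑ t ∈ powersetCard k s, ∑ j ∈ s \ t, v j * ∏ i ∈ t, v i
      = ∑ u ∈ powersetCard (k + 1) s, ∑ j ∈ u, ∏ i ∈ u, v i := by
    rw [Finset.sum_sigma', Finset.sum_sigma']
    refine Finset.sum_nbij' (fun p => ⟨insert p.2 p.1, p.2⟩)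
      (fun p => ⟨p.1.erase p.2, p.2⟩) ?_ ?_ ?_ ?_ ?_
    · rintro ⟨t, j⟩ h
      simp only [Finset.mem_sigma, mem_powersetCard, mem_sdiff] at h ⊢
      obtain ⟨⟨hts, htk⟩, hjs, hjt⟩ := h
      refine ⟨⟨insert_subset hjs hts, ?_⟩, mem_insert_self _ _⟩
      rw [card_insert_of_notMem hjt, htk]
    · rintro ⟨u, j⟩ h
      simp only [Finset.mem_sigma, mem_powersetCard, mem_sdiff] at h ⊢
      obtain ⟨⟨hus, huk⟩, hju⟩ := h
      refine ⟨⟨(erase_subset _ _).trans hus, ?_⟩, hus hju, notMem_erase _ _⟩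
      rw [card_erase_of_mem hju, huk]; rfl
    · rintro ⟨t, j⟩ h
      simp only [Finset.mem_sigma, mem_powersetCard, mem_sdiff] at h
      simp [Finset.erase_insert h.2.2]
    · rintro ⟨u, j⟩ h
      simp only [Finset.mem_sigma, mem_powersetCard, mem_sdiff] at h
      simp [Finset.insert_erase h.2]
    · rintro ⟨t, j⟩ h
      simp only [Finset.mem_sigma, mem_powersetCard, mem_sdiff] at h
      rw [Finset.prod_insert h.2.2]
  rw [key]
  refine Finset.sum_congr rfl fun u hu => ?_
  rw [mem_powersetCard] at hu
  rw [Finset.sum_const, nsmul_eq_mul, hu.2]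

lemma aux_split {ι : Type*} [DecidableEq ι] (s : Finset ι) (i : ι) (hi : i ∈ s)
    (k : ℕ) (v : ι → ℝ) :
    esymmOn s (k + 1) v
      = esymmOn (s.erase i) (k + 1) v + v i * esymmOn (s.erase i) k v := by
  unfold esymmOn
  conv_lhs => rw [← Finset.insert_erase hi]
  rw [powersetCard_succ_insert (notMem_erase _ _)]
  rw [Finset.sum_union]
  · congr 1
    rw [Finset.sum_image, Finset.mul_sum]
    · refine Finset.sum_congr rfl fun t ht => ?_
      rw [mem_powersetCard] at ht
      rw [Finset.prod_insert (fun h => notMem_erase i s (ht.1 h))]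
    · intro t ht u hu hins
      rw [Finset.mem_coe, mem_powersetCard] at ht hu
      have hit : i ∉ t := fun h => notMem_erase i s (ht.1 h)
      have hiu : i ∉ u := fun h => notMem_erase i s (hu.1 h)
      rw [← Finset.erase_insert hit, hins, Finset.erase_insert hiu]
  · rw [Finset.disjoint_right]
    rintro u hu hu'
    simp only [Finset.mem_image] at hu
    obtain ⟨t, ht, rfl⟩ := hu
    rw [mem_powersetCard] at hu'
    exact notMem_erase i s (hu'.1 (mem_insert_self _ _))

/-- For `l ≥ 1`, `1 ≤ q ≤ l - 1` and reals `λ₁, …, λ_{2l}`: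
`∑_{j=2}^{2l} [ S_{2q}(λ₂,…,λ̂ⱼ,…,λ_{2l})/(2l-2q-1)
  + λ₁ λⱼ S_{2q-2}(λ₂,…,λ̂ⱼ,…,λ_{2l})/(2q-1) ]` = S_{2q}(λ₁,…,λ_{2l})`. -/
theorem sum_esymm_deleted_identity (l : ℕ) (hl : 1 ≤ l) (q : ℕ) (hq1 : 1 ≤ q)
    (hq2 : q ≤ l - 1) (lam : Fin (2 * l) → ℝ) (i0 : Fin (2 * l)) (hi0 : (i0 : ℕ) = 0) :
    ∑ j ∈ univ.erase i0,
        (esymmOn ((univ.erase i0).erase j) (2 * q) lam / ((2 * l - 2 * q - 1 : ℕ) : ℝ)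
          + lam i0 * lam j *
              esymmOn ((univ.erase i0).erase j) (2 * q - 2) lam / ((2 * q - 1 : ℕ) : ℝ))
      = esymmOn univ (2 * q) lam := by
  set A : Finset (Fin (2 * l)) := univ.erase i0 with hA
  have hql : q + 1 ≤ l := by omega
  have hAcard : A.card = 2 * l - 1 := by
    rw [hA, Finset.card_erase_of_mem (mem_univ _), Finset.card_univ, Fintype.card_fin]
  have hc1 : (2 * l - 2 * q - 1 : ℕ) ≠ 0 := by omega
  have hc2 : (2 * q - 1 : ℕ) ≠ 0 := by omega
  have hc1' : ((2 * l - 2 * q - 1 : ℕ) : ℝ) ≠ 0 := Nat.cast_ne_zero.mpr hc1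
  have hc2' : ((2 * q - 1 : ℕ) : ℝ) ≠ 0 := Nat.cast_ne_zero.mpr hc2
  rw [Finset.sum_add_distrib]
  have h1 : ∑ j ∈ A, esymmOn (A.erase j) (2 * q) lam / ((2 * l - 2 * q - 1 : ℕ) : ℝ)
      = esymmOn A (2 * q) lam := by
    rw [← Finset.sum_div, aux_sum_erase, hAcard]
    have : (2 * l - 1 - 2 * q : ℕ) = 2 * l - 2 * q - 1 := by omega
    rw [this, mul_comm, mul_div_assoc, div_self hc1', mul_one]
  have h2 : ∑ j ∈ A, lam i0 * lam j * esymmOn (A.erase j) (2 * q - 2) lam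
        / ((2 * q - 1 : ℕ) : ℝ)
      = lam i0 * esymmOn A (2 * q - 1) lam := by
    rw [← Finset.sum_div]
    have : ∑ j ∈ A, lam i0 * lam j * esymmOn (A.erase j) (2 * q - 2) lam
        = lam i0 * ∑ j ∈ A, lam j * esymmOn (A.erase j) (2 * q - 2) lam := by
      rw [Finset.mul_sum]; exact Finset.sum_congr rfl fun j _ => by ring
    rw [this, aux_sum_mul_erase]
    have h21 : (2 * q - 2 + 1 : ℕ) = 2 * q - 1 := by omega
    rw [h21, mul_comm ((2 * q - 1 : ℕ) : ℝ), ← mul_assoc, mul_div_assoc,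
      div_self hc2', mul_one]
  rw [h1, h2]
  have h3 : (2 * q - 1 + 1 : ℕ) = 2 * q := by omega
  have := aux_split (univ : Finset (Fin (2 * l))) i0 (mem_univ _) (2 * q - 1) lam
  rw [h3] at this
  rw [this]
end

section
/- Let n ≥ 2, c a real number, and consider the constant-coefficient recurrence j·b_{j-1} - c(n-j)·b_{j+1} = 0 for all 0 ≤ j ≤ n (with b_{-1} = b_{n+1} = 0). If c ≠ 0 and n = 2l is even, then every solution satisfies b_{2j+1} = 0 for all j, and b_{2p} = (1·3·5···(2p-1)) · b₀ / (c^p (n-1)(n-3)···(n-2p+1)) for all 1 ≤ p ≤ l. If c ≠ 0 and n is odd, the only solution is b_j = 0 for all j. If c = 0, solutions are exactly those with b₀ = b₁ = ⋯ = b_{n-1} = 0. -/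
open Finset

/-- Solutions of the constant-coefficient recurrence `j·b_{j-1} - c(n-j)·b_{j+1} = 0`,
`0 ≤ j ≤ n` (the boundary values `b_{-1}`, `b_{n+1}` occur only with zero coefficient).
If `c ≠ 0` and `n = 2l` is even, then `b_odd = 0` and
`b_{2p} = (1·3···(2p-1)) b₀ / (c^p (n-1)(n-3)···(n-2p+1))` for `1 ≤ p ≤ l`;
if `c ≠ 0` and `n` is odd, then all `b_j = 0`;
if `c = 0`, the solutions are exactly those with `b₀ = ⋯ = b_{n-1} = 0`. -/
theorem recurrence_solutions (n : ℕ) (hn : 2 ≤ n) (c : ℝ) (b : ℕ → ℝ) :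
    ((∀ j ≤ n, (j : ℝ) * b (j - 1) - c * ((n : ℝ) - (j : ℝ)) * b (j + 1) = 0) →
      c ≠ 0 →
      ((∀ l, n = 2 * l →
          (∀ j, 2 * j + 1 ≤ n → b (2 * j + 1) = 0) ∧
          (∀ p, 1 ≤ p → p ≤ l →
            b (2 * p) = (∏ i ∈ range p, (2 * (i : ℝ) + 1)) * b 0 /
              (c ^ p * ∏ i ∈ range p, ((n : ℝ) - (2 * (i : ℝ) + 1))))) ∧
        (Odd n → ∀ j ≤ n, b j = 0))) ∧
    (c = 0 →
      ((∀ j ≤ n, (j : ℝ) * b (j - 1) - c * ((n : ℝ) - (j : ℝ)) * b (j + 1) = 0) ↔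
        ∀ j < n, b j = 0)) := by
  constructor
  · intro hrec hc
    have hnR : (0:ℝ) < (n:ℝ) := by exact_mod_cast (by omega : 0 < n)
    have hb1 : b 1 = 0 := by
      have h := hrec 0 (by omega)
      push_cast at h
      have : c * (n:ℝ) * b 1 = 0 := by linarith
      rcases mul_eq_zero.mp this with h' | h'
      · rcases mul_eq_zero.mp h' with h'' | h''
        · exact absurd h'' hc
        · linarith
      · exact h'
    have hodd : ∀ j, 2 * j + 1 ≤ n → b (2 * j + 1) = 0 := by
      intro j
      induction j with
      | zero => intro _; exact hb1
      | succ j ih =>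
        intro hj
        have h := hrec (2 * j + 2) (by omega)
        have h1 : 2 * j + 2 - 1 = 2 * j + 1 := by omega
        rw [h1, ih (by omega)] at h
        have hlt : ((2 * j + 2 : ℕ) : ℝ) < (n : ℝ) := by exact_mod_cast (by omega : 2 * j + 2 < n)
        push_cast at h ⊢
        have h2 : c * ((n:ℝ) - (2 * (j:ℝ) + 2)) * b (2 * j + 2 + 1) = 0 := by linarith
        have h3 : 2 * j + 2 + 1 = 2 * (j + 1) + 1 := by omega
        rw [h3] at h2
        rcases mul_eq_zero.mp h2 with h' | h'
        · rcases mul_eq_zero.mp h' with h'' | h''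
          · exact absurd h'' hc
          · push_cast at hlt; nlinarith
        · exact h'
    constructor
    · intro l hl
      refine ⟨fun j hj => hodd j hj, ?_⟩
      have key : ∀ p, p ≤ l → b (2 * p) = (∏ i ∈ range p, (2 * (i : ℝ) + 1)) * b 0 /
              (c ^ p * ∏ i ∈ range p, ((n : ℝ) - (2 * (i : ℝ) + 1))) := by
        intro p
        induction p with
        | zero => intro _; simp
        | succ p ih =>
          intro hp
          have IH := ih (by omega)
          have h := hrec (2 * p + 1) (by omega)
          have h1 : 2 * p + 1 - 1 = 2 * p := by omega
          rw [h1] at h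
          have hQ : ∀ i, i < p + 1 → ((n : ℝ) - (2 * (i : ℝ) + 1)) ≠ 0 := by
            intro i hi hzero
            have : (n : ℝ) = 2 * (i:ℝ) + 1 := by linarith
            have : n = 2 * i + 1 := by exact_mod_cast this
            omega
          have hQp : (∏ i ∈ range p, ((n : ℝ) - (2 * (i : ℝ) + 1))) ≠ 0 :=
            prod_ne_zero_iff.mpr (fun i hi => hQ i (Nat.lt_succ_of_lt (mem_range.mp hi)))
          have hterm : ((n : ℝ) - (2 * (p : ℝ) + 1)) ≠ 0 := hQ p (by omega)
          have hcp : c ^ p ≠ 0 := pow_ne_zero _ hc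
          have hb2 : b (2 * p + 1 + 1) = ((2 * p + 1 : ℕ) : ℝ) * b (2 * p) / (c * ((n:ℝ) - ((2 * p + 1 : ℕ) : ℝ))) := by
            push_cast at hterm ⊢
            field_simp
            push_cast at h
            linarith
          have h3 : 2 * p + 1 + 1 = 2 * (p + 1) := by omega
          rw [h3] at hb2
          rw [hb2, IH, prod_range_succ, prod_range_succ]
          push_cast
          field_simp
          ring
      intro p hp hpl
      exact key p hpl
    · intro hoddn j hj
      have hev : ∀ k, 2 * k + 1 ≤ n → b (n - (2 * k + 1)) = 0 := by
        intro k
        induction k with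
        | zero =>
          intro _
          have h := hrec n le_rfl
          have : ((n:ℝ) - (n:ℝ)) = 0 := by ring
          rw [this] at h
          have h2 : (n:ℝ) * b (n - 1) = 0 := by linarith
          rcases mul_eq_zero.mp h2 with h' | h'
          · linarith
          · exact h'
        | succ k ih =>
          intro hk
          have h := hrec (n - (2 * k + 2)) (by omega)
          have e1 : n - (2 * k + 2) - 1 = n - (2 * (k + 1) + 1) := by omega
          have e2 : n - (2 * k + 2) + 1 = n - (2 * k + 1) := by omega
          rw [e1, e2, ih (by omega)] at h
          have hpos : (0:ℝ) < ((n - (2 * k + 2) : ℕ) : ℝ) := by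
            exact_mod_cast (by omega : 0 < n - (2 * k + 2))
          have h2 : ((n - (2 * k + 2) : ℕ) : ℝ) * b (n - (2 * (k + 1) + 1)) = 0 := by linarith
          rcases mul_eq_zero.mp h2 with h' | h'
          · linarith
          · exact h'
      rcases Nat.even_or_odd j with hje | hjo
      · obtain ⟨m, hm⟩ := hoddn
        obtain ⟨t, ht⟩ := hje
        obtain ⟨k, hk1, hk2⟩ : ∃ k, j = n - (2 * k + 1) ∧ 2 * k + 1 ≤ n :=
          ⟨m - t, by omega, by omega⟩
        rw [hk1]; exact hev _ hk2
      · obtain ⟨m, hm⟩ := hjo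
        rw [hm]; exact hodd m (by omega)
  · intro hc0
    constructor
    · intro hrec j hj
      have h := hrec (j + 1) (by omega)
      rw [hc0] at h
      have e : j + 1 - 1 = j := by omega
      rw [e] at h
      have h2 : ((j + 1 : ℕ) : ℝ) * b j = 0 := by push_cast at h ⊢; linarith
      rcases mul_eq_zero.mp h2 with h' | h'
      · exact absurd h' (by positivity)
      · exact h'
    · intro hz j hj
      rw [hc0]
      rcases Nat.eq_zero_or_pos j with rfl | hj'
      · simp
      · have : b (j - 1) = 0 := hz _ (by omega)
        rw [this]; ring
end

section
/- Let n = 2l, let c, λ₁,…,λₙ be real numbers, and let Ω be the n×n skew-symmetric matrix with entries in the even exterior algebra of Rⁿ given by Ω_{ij} = (c + λᵢλⱼ) eⁱ∧eʲ, where e¹,…,eⁿ is the standard basis of (Rⁿ)*. Then Pf(Ω) = [Σ_{p=0}^{l} (2l-2p-1)!!(2p-1)!! c^{l-p} S_{2p}(λ₁,…,λₙ)] · e¹∧⋯∧eⁿ, where S_{2p} is the elementary symmetric polynomial of degree 2p. -/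
open Finset Equiv

/-- The Pfaffian of a `2m × 2m` matrix over a (not necessarily commutative) ring:
the sum over perfect matchings, encoded as permutations `σ` with
`σ(2i) < σ(2i+1)` and `σ(0) < σ(2) < ⋯ < σ(2m-2)`, of
`sgn σ · X_{σ(0) σ(1)} ⋯ X_{σ(2m-2) σ(2m-1)}` (ordered product). -/
def pfaffian {R : Type*} [Ring R] (m : ℕ) (X : Matrix (Fin (2 * m)) (Fin (2 * m)) R) : R :=
  ∑ σ ∈ univ.filter (fun σ : Perm (Fin (2 * m)) =>
      (∀ i : Fin m, σ ⟨2 * i, by have := i.isLt; omega⟩ < σ ⟨2 * i + 1, by have := i.isLt; omega⟩) ∧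
      (∀ i j : Fin m, i < j →
        σ ⟨2 * i, by have := i.isLt; omega⟩ < σ ⟨2 * j, by have := j.isLt; omega⟩)),
    (Perm.sign σ : ℤ) •
      ((List.finRange m).map (fun (i : Fin m) =>
        X (σ ⟨2 * i, by have := i.isLt; omega⟩) (σ ⟨2 * i + 1, by have := i.isLt; omega⟩))).prod

/-- The basis covector `eⁱ`, as the degree-one element `ι (eᵢ)` of the exterior
algebra of `ℝⁿ`. -/
noncomputable def eVec (n : ℕ) (i : Fin n) : ExteriorAlgebra ℝ (Fin n → ℝ) :=
  ExteriorAlgebra.ι ℝ (Pi.single i 1)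

/-- The top form `e¹ ∧ ⋯ ∧ eⁿ`. -/
noncomputable def topForm (n : ℕ) : ExteriorAlgebra ℝ (Fin n → ℝ) :=
  ((List.finRange n).map (eVec n)).prod

namespace AW
def FS (m : ℕ) : Finset (Perm (Fin (2 * m))) :=
  univ.filter (fun σ : Perm (Fin (2 * m)) =>
      (∀ i : Fin m, σ ⟨2 * i, by have := i.isLt; omega⟩ < σ ⟨2 * i + 1, by have := i.isLt; omega⟩) ∧
      (∀ i j : Fin m, i < j →
        σ ⟨2 * i, by have := i.isLt; omega⟩ < σ ⟨2 * j, by have := j.isLt; omega⟩))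

lemma mem_FS {m : ℕ} {σ : Perm (Fin (2 * m))} :
    σ ∈ FS m ↔
      (∀ i : Fin m, σ ⟨2 * i, by have := i.isLt; omega⟩ < σ ⟨2 * i + 1, by have := i.isLt; omega⟩) ∧
      (∀ i j : Fin m, i < j →
        σ ⟨2 * i, by have := i.isLt; omega⟩ < σ ⟨2 * j, by have := j.isLt; omega⟩) := by
  simp [FS]

lemma FS_pair {m : ℕ} {σ : Perm (Fin (2 * m))} (hσ : σ ∈ FS m) (i : ℕ) (hi : i < m)
    {x y : ℕ} (hx : x < 2 * m) (hy : y < 2 * m) (ex : x = 2 * i) (ey : y = 2 * i + 1) :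
    (σ ⟨x, hx⟩ : ℕ) < (σ ⟨y, hy⟩ : ℕ) := by
  subst ex; subst ey
  exact Fin.lt_def.mp ((mem_FS.mp hσ).1 ⟨i, hi⟩)

lemma FS_sorted {m : ℕ} {σ : Perm (Fin (2 * m))} (hσ : σ ∈ FS m) (i j : ℕ)
    (hi : i < m) (hj : j < m) (hij : i < j)
    {x y : ℕ} (hx : x < 2 * m) (hy : y < 2 * m) (ex : x = 2 * i) (ey : y = 2 * j) :
    (σ ⟨x, hx⟩ : ℕ) < (σ ⟨y, hy⟩ : ℕ) := by
  subst ex; subst ey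
  exact Fin.lt_def.mp ((mem_FS.mp hσ).2 ⟨i, hi⟩ ⟨j, hj⟩ (by simpa using hij))

lemma mem_FS_of {m : ℕ} {σ : Perm (Fin (2 * m))}
    (h1 : ∀ (i : ℕ) (hi : i < m) (hx : 2 * i < 2 * m) (hy : 2 * i + 1 < 2 * m),
      (σ ⟨2 * i, hx⟩ : ℕ) < (σ ⟨2 * i + 1, hy⟩ : ℕ))
    (h2 : ∀ (i j : ℕ) (hi : i < m) (hj : j < m), i < j →
      ∀ (hx : 2 * i < 2 * m) (hy : 2 * j < 2 * m),
      (σ ⟨2 * i, hx⟩ : ℕ) < (σ ⟨2 * j, hy⟩ : ℕ)) : σ ∈ FS m := by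
  refine mem_FS.mpr ⟨fun i => ?_, fun i j hij => ?_⟩
  · exact Fin.lt_def.mpr (h1 i i.isLt (by have := i.isLt; omega) (by have := i.isLt; omega))
  · exact Fin.lt_def.mpr (h2 i j i.isLt j.isLt hij (by have := i.isLt; omega)
      (by have := j.isLt; omega))

lemma perm_val_ne {n : ℕ} (σ : Perm (Fin n)) {x y : ℕ} (hx : x < n) (hy : y < n)
    (h : x ≠ y) : (σ ⟨x, hx⟩ : ℕ) ≠ (σ ⟨y, hy⟩ : ℕ) := by
  intro he
  exact h (congrArg Fin.val (σ.injective (Fin.ext he)))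

/-- `σ(0) = 0` for normalized permutations. -/
lemma FS_zero_val {l : ℕ} {σ : Perm (Fin (2 * (l + 1)))} (hσ : σ ∈ FS (l + 1))
    (h0 : (0 : ℕ) < 2 * (l + 1)) : (σ ⟨0, h0⟩ : ℕ) = 0 := by
  have key : ∀ j : Fin (2 * (l + 1)), (σ ⟨0, h0⟩ : ℕ) ≤ (σ j : ℕ) := by
    intro j
    have hj := j.isLt
    rcases Nat.eq_zero_or_pos ((j : ℕ) / 2) with hq | hq
    · rcases Nat.mod_two_eq_zero_or_one (j : ℕ) with hr | hr
      · have he : σ j = σ ⟨0, h0⟩ := congrArg σ (Fin.ext (show (j : ℕ) = 0 by omega))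
        rw [he]
      · have h1n : (1 : ℕ) < 2 * (l + 1) := by omega
        have hlt := FS_pair hσ 0 (by omega) h0 h1n (by omega) (by omega)
        have he : σ j = σ ⟨1, h1n⟩ := congrArg σ (Fin.ext (show (j : ℕ) = 1 by omega))
        rw [he]; omega
    · have hq2 : 2 * ((j : ℕ) / 2) < 2 * (l + 1) := by omega
      have hs := FS_sorted hσ 0 ((j : ℕ) / 2) (by omega) (by omega) hq h0 hq2
        (by omega) rfl
      rcases Nat.mod_two_eq_zero_or_one (j : ℕ) with hr | hr
      · have he : σ j = σ ⟨2 * ((j : ℕ) / 2), hq2⟩ :=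
          congrArg σ (Fin.ext (show (j : ℕ) = 2 * ((j : ℕ) / 2) by omega))
        rw [he]; omega
      · have hq3 : 2 * ((j : ℕ) / 2) + 1 < 2 * (l + 1) := by omega
        have hp := FS_pair hσ ((j : ℕ) / 2) (by omega) hq2 hq3 rfl rfl
        have he : σ j = σ ⟨2 * ((j : ℕ) / 2) + 1, hq3⟩ :=
          congrArg σ (Fin.ext (show (j : ℕ) = 2 * ((j : ℕ) / 2) + 1 by omega))
        rw [he]; omega
  have h' := key (σ⁻¹ ⟨0, h0⟩)
  rw [show σ (σ⁻¹ ⟨0, h0⟩) = ⟨0, h0⟩ from σ.apply_symm_apply _] at h'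
  simpa using Nat.le_zero.mp h'
variable {l : ℕ}

lemma val_mk {n a : ℕ} (h : a < n) : ((⟨a, h⟩ : Fin n) : ℕ) = a := rfl

def dmap (l : ℕ) (k : Fin (2 * l + 1)) (v : Fin (2 * l)) : Fin (2 * (l + 1)) :=
  if (v : ℕ) < (k : ℕ) then ⟨(v : ℕ) + 1, by have := v.isLt; omega⟩
  else ⟨(v : ℕ) + 2, by have := v.isLt; omega⟩

lemma dmap_val (k : Fin (2 * l + 1)) (v : Fin (2 * l)) :
    (dmap l k v : ℕ) = if (v : ℕ) < (k : ℕ) then (v : ℕ) + 1 else (v : ℕ) + 2 := by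
  unfold dmap; split <;> rfl

lemma dmap_inj (k : Fin (2 * l + 1)) : Function.Injective (dmap l k) := by
  intro a b h
  have h' := congrArg Fin.val h
  rw [dmap_val, dmap_val] at h'
  apply Fin.ext
  split at h' <;> split at h' <;> omega

lemma dmap_lt_dmap (k : Fin (2 * l + 1)) {a b : Fin (2 * l)} (h : (a : ℕ) < (b : ℕ)) :
    (dmap l k a : ℕ) < (dmap l k b : ℕ) := by
  rw [dmap_val, dmap_val]; split <;> split <;> omega

def dinv (l : ℕ) (k : Fin (2 * l + 1)) (v : Fin (2 * (l + 1)))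
    (h0 : (v : ℕ) ≠ 0) (h1 : (v : ℕ) ≠ (k : ℕ) + 1) : Fin (2 * l) :=
  ⟨if (v : ℕ) < (k : ℕ) + 1 then (v : ℕ) - 1 else (v : ℕ) - 2,
    by have := v.isLt; have := k.isLt; split <;> omega⟩

lemma dinv_val (k : Fin (2 * l + 1)) (v : Fin (2 * (l + 1))) (h0 h1) :
    (dinv l k v h0 h1 : ℕ) = if (v : ℕ) < (k : ℕ) + 1 then (v : ℕ) - 1 else (v : ℕ) - 2 := rfl

lemma dmap_dinv (k : Fin (2 * l + 1)) (v : Fin (2 * (l + 1))) (h0 h1) :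
    dmap l k (dinv l k v h0 h1) = v := by
  apply Fin.ext
  rw [dmap_val, dinv_val]
  have := v.isLt; have := k.isLt
  split_ifs <;> omega

lemma dinv_dmap (k : Fin (2 * l + 1)) (a : Fin (2 * l)) (h0 h1) :
    dinv l k (dmap l k a) h0 h1 = a := by
  apply Fin.ext
  rw [dinv_val, dmap_val]
  have := a.isLt; have := k.isLt
  split_ifs <;> omega

lemma dinv_lt_dinv (k : Fin (2 * l + 1)) {v w : Fin (2 * (l + 1))} (hv0 hv1 hw0 hw1)
    (h : (v : ℕ) < (w : ℕ)) :
    (dinv l k v hv0 hv1 : ℕ) < (dinv l k w hw0 hw1 : ℕ) := by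
  rw [dinv_val, dinv_val]
  have := k.isLt
  split_ifs <;> omega

def insFun (l : ℕ) (k : Fin (2 * l + 1)) (σ : Perm (Fin (2 * l)))
    (j : Fin (2 * (l + 1))) : Fin (2 * (l + 1)) :=
  if h0 : (j : ℕ) = 0 then ⟨0, by omega⟩
  else if h1 : (j : ℕ) = 1 then ⟨(k : ℕ) + 1, by have := k.isLt; omega⟩
  else dmap l k (σ ⟨(j : ℕ) - 2, by have := j.isLt; omega⟩)

lemma insFun_zero (k : Fin (2 * l + 1)) (σ : Perm (Fin (2 * l))) (h : (0:ℕ) < 2 * (l+1)) :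
    insFun l k σ ⟨0, h⟩ = ⟨0, h⟩ := by simp [insFun]

lemma insFun_one (k : Fin (2 * l + 1)) (σ : Perm (Fin (2 * l))) (h : (1:ℕ) < 2 * (l+1))
    (h' : (k : ℕ) + 1 < 2 * (l + 1)) :
    insFun l k σ ⟨1, h⟩ = ⟨(k : ℕ) + 1, h'⟩ := by simp [insFun]

lemma insFun_ge (k : Fin (2 * l + 1)) (σ : Perm (Fin (2 * l))) (a : ℕ) (h2 : 2 ≤ a)
    (ha : a < 2 * (l + 1)) (ha' : a - 2 < 2 * l) :
    insFun l k σ ⟨a, ha⟩ = dmap l k (σ ⟨a - 2, ha'⟩) := by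
  unfold insFun
  simp only [val_mk]
  rw [dif_neg (by omega), dif_neg (by omega)]

lemma insFun_inj (k : Fin (2 * l + 1)) (σ : Perm (Fin (2 * l))) :
    Function.Injective (insFun l k σ) := by
  intro a b h
  have ha := a.isLt; have hb := b.isLt; have hk := k.isLt
  have hv := congrArg Fin.val h
  unfold insFun at hv
  simp only [apply_dite Fin.val, val_mk] at hv
  apply Fin.ext
  split_ifs at hv <;>
    first
      | omega
      | (rw [dmap_val] at hv; split at hv <;> omega)
      | (have hd := Fin.ext hv
         have h5 := congrArg Fin.val (σ.injective (dmap_inj k hd))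
         simp only [val_mk] at h5
         omega)

noncomputable def ins (l : ℕ) (k : Fin (2 * l + 1)) (σ : Perm (Fin (2 * l))) :
    Perm (Fin (2 * (l + 1))) :=
  Equiv.ofBijective (insFun l k σ) (insFun_inj k σ).bijective_of_finite

lemma ins_apply (k : Fin (2 * l + 1)) (σ : Perm (Fin (2 * l))) (j : Fin (2 * (l + 1))) :
    ins l k σ j = insFun l k σ j := rfl

noncomputable def del (l : ℕ) (k : Fin (2 * l + 1)) (σ : Perm (Fin (2 * (l + 1))))
    (h : ∀ j : Fin (2 * l), (σ ⟨(j : ℕ) + 2, by have := j.isLt; omega⟩ : ℕ) ≠ 0 ∧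
        (σ ⟨(j : ℕ) + 2, by have := j.isLt; omega⟩ : ℕ) ≠ (k : ℕ) + 1) : Perm (Fin (2 * l)) :=
  Equiv.ofBijective
    (fun j => dinv l k (σ ⟨(j : ℕ) + 2, by have := j.isLt; omega⟩) (h j).1 (h j).2)
    (Function.Injective.bijective_of_finite (by
      intro a b hab
      have h1 := congrArg (dmap l k) hab
      rw [dmap_dinv, dmap_dinv] at h1
      have h2 := congrArg Fin.val (σ.injective h1)
      simp only [val_mk] at h2
      exact Fin.ext (show (a : ℕ) = (b : ℕ) by omega)))

lemma del_apply (k : Fin (2 * l + 1)) (σ : Perm (Fin (2 * (l + 1)))) (h) (j : Fin (2 * l)) :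
    del l k σ h j = dinv l k (σ ⟨(j : ℕ) + 2, by have := j.isLt; omega⟩) (h j).1 (h j).2 := rfl


lemma dmap_ne0 (k : Fin (2 * l + 1)) (v : Fin (2 * l)) : (dmap l k v : ℕ) ≠ 0 := by
  rw [dmap_val]; split <;> omega

lemma dmap_nek (k : Fin (2 * l + 1)) (v : Fin (2 * l)) : (dmap l k v : ℕ) ≠ (k : ℕ) + 1 := by
  rw [dmap_val]; have := v.isLt; split <;> omega

lemma dinv_congr {k k' : Fin (2 * l + 1)} {v v' : Fin (2 * (l + 1))} (hk : k = k')
    (hv : v = v') {h0 h1} (h0' h1') : dinv l k v h0 h1 = dinv l k' v' h0' h1' := by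
  subst hk; subst hv; rfl

noncomputable def kOf {l : ℕ} (σ : Perm (Fin (2 * (l + 1)))) : Fin (2 * l + 1) :=
  ⟨(σ ⟨1, by omega⟩ : ℕ) - 1, by have := (σ ⟨1, by omega⟩).isLt; omega⟩

lemma kOf_val {l : ℕ} (σ : Perm (Fin (2 * (l + 1)))) (h1n : (1 : ℕ) < 2 * (l + 1)) :
    (kOf σ : ℕ) = (σ ⟨1, h1n⟩ : ℕ) - 1 := rfl

lemma del_cond {σ : Perm (Fin (2 * (l + 1)))} (hσ : σ ∈ FS (l + 1)) (j : Fin (2 * l))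
    (hj2 : (j : ℕ) + 2 < 2 * (l + 1)) :
    (σ ⟨(j : ℕ) + 2, hj2⟩ : ℕ) ≠ 0 ∧ (σ ⟨(j : ℕ) + 2, hj2⟩ : ℕ) ≠ (kOf σ : ℕ) + 1 := by
  have h0n : (0 : ℕ) < 2 * (l + 1) := by omega
  have h1n : (1 : ℕ) < 2 * (l + 1) := by omega
  have hz := FS_zero_val hσ h0n
  have h01 := FS_pair hσ 0 (by omega) h0n h1n (by omega) (by omega)
  have hne0 : (σ ⟨(j : ℕ) + 2, hj2⟩ : ℕ) ≠ (σ ⟨0, h0n⟩ : ℕ) :=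
    perm_val_ne σ hj2 h0n (by omega)
  have hne1 : (σ ⟨(j : ℕ) + 2, hj2⟩ : ℕ) ≠ (σ ⟨1, h1n⟩ : ℕ) :=
    perm_val_ne σ hj2 h1n (by omega)
  have hk := kOf_val σ h1n
  exact ⟨by omega, by omega⟩

noncomputable def delOf {l : ℕ} (σ : Perm (Fin (2 * (l + 1)))) (hσ : σ ∈ FS (l + 1)) :
    Perm (Fin (2 * l)) :=
  del l (kOf σ) σ (fun j => del_cond hσ j (by have := j.isLt; omega))

lemma ins_mem (k : Fin (2 * l + 1)) {σ' : Perm (Fin (2 * l))} (hσ' : σ' ∈ FS l) :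
    ins l k σ' ∈ FS (l + 1) := by
  have hk := k.isLt
  apply mem_FS_of
  · intro i hi hx hy
    rcases Nat.eq_zero_or_pos i with h0 | h0
    · have e1 : ins l k σ' ⟨2 * i, hx⟩ = ⟨0, by omega⟩ := by
        rw [ins_apply, show (⟨2 * i, hx⟩ : Fin (2 * (l + 1))) = ⟨0, by omega⟩ from
          Fin.ext (show 2 * i = 0 by omega)]
        exact insFun_zero k σ' _
      have e2 : ins l k σ' ⟨2 * i + 1, hy⟩ = ⟨(k : ℕ) + 1, by omega⟩ := by
        rw [ins_apply, show (⟨2 * i + 1, hy⟩ : Fin (2 * (l + 1))) = ⟨1, by omega⟩ from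
          Fin.ext (show 2 * i + 1 = 1 by omega)]
        exact insFun_one k σ' _ _
      rw [e1, e2]; simp only [val_mk]; omega
    · have hx' : 2 * i - 2 < 2 * l := by omega
      have hy' : 2 * i + 1 - 2 < 2 * l := by omega
      have e1 : ins l k σ' ⟨2 * i, hx⟩ = dmap l k (σ' ⟨2 * i - 2, hx'⟩) := by
        rw [ins_apply]; exact insFun_ge k σ' (2 * i) (by omega) hx hx'
      have e2 : ins l k σ' ⟨2 * i + 1, hy⟩ = dmap l k (σ' ⟨2 * i + 1 - 2, hy'⟩) := by
        rw [ins_apply]; exact insFun_ge k σ' (2 * i + 1) (by omega) hy hy'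
      rw [e1, e2]
      exact dmap_lt_dmap k (FS_pair hσ' (i - 1) (by omega) hx' hy' (by omega) (by omega))
  · intro i j hi hj hij hx hy
    have hy' : 2 * j - 2 < 2 * l := by omega
    have e2 : ins l k σ' ⟨2 * j, hy⟩ = dmap l k (σ' ⟨2 * j - 2, hy'⟩) := by
      rw [ins_apply]; exact insFun_ge k σ' (2 * j) (by omega) hy hy'
    rcases Nat.eq_zero_or_pos i with h0 | h0
    · have e1 : ins l k σ' ⟨2 * i, hx⟩ = ⟨0, by omega⟩ := by
        rw [ins_apply, show (⟨2 * i, hx⟩ : Fin (2 * (l + 1))) = ⟨0, by omega⟩ from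
          Fin.ext (show 2 * i = 0 by omega)]
        exact insFun_zero k σ' _
      rw [e1, e2]
      have := dmap_val k (σ' ⟨2 * j - 2, hy'⟩)
      simp only [val_mk]
      split at this <;> omega
    · have hx' : 2 * i - 2 < 2 * l := by omega
      have e1 : ins l k σ' ⟨2 * i, hx⟩ = dmap l k (σ' ⟨2 * i - 2, hx'⟩) := by
        rw [ins_apply]; exact insFun_ge k σ' (2 * i) (by omega) hx hx'
      rw [e1, e2]
      exact dmap_lt_dmap k
        (FS_sorted hσ' (i - 1) (j - 1) (by omega) (by omega) (by omega) hx' hy'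
          (by omega) (by omega))

lemma delOf_mem {σ : Perm (Fin (2 * (l + 1)))} (hσ : σ ∈ FS (l + 1)) :
    delOf σ hσ ∈ FS l := by
  apply mem_FS_of
  · intro i hi hx hy
    unfold delOf
    rw [del_apply, del_apply]
    apply dinv_lt_dinv
    simp only [val_mk]
    exact FS_pair hσ (i + 1) (by omega) (by omega) (by omega) (by omega) (by omega)
  · intro i j hi hj hij hx hy
    unfold delOf
    rw [del_apply, del_apply]
    apply dinv_lt_dinv
    simp only [val_mk]
    exact FS_sorted hσ (i + 1) (j + 1) (by omega) (by omega) (by omega) (by omega)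
      (by omega) (by omega) (by omega)

lemma ins_delOf {σ : Perm (Fin (2 * (l + 1)))} (hσ : σ ∈ FS (l + 1)) :
    ins l (kOf σ) (delOf σ hσ) = σ := by
  have h0n : (0 : ℕ) < 2 * (l + 1) := by omega
  have h1n : (1 : ℕ) < 2 * (l + 1) := by omega
  apply Equiv.ext
  intro v
  have hv := v.isLt
  by_cases p0 : (v : ℕ) = 0
  · rw [show v = ⟨0, h0n⟩ from Fin.ext p0, ins_apply, insFun_zero]
    exact Fin.ext (show (0 : ℕ) = (σ ⟨0, h0n⟩ : ℕ) from (FS_zero_val hσ h0n).symm)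
  · by_cases p1 : (v : ℕ) = 1
    · have hkb : (kOf σ : ℕ) + 1 < 2 * (l + 1) := by
        have hk := kOf_val σ h1n
        have := (σ ⟨1, h1n⟩).isLt
        omega
      rw [show v = ⟨1, h1n⟩ from Fin.ext p1, ins_apply, insFun_one _ _ _ hkb]
      have hk := kOf_val σ h1n
      have h01 := FS_pair hσ 0 (by omega) h0n h1n (by omega) (by omega)
      have hz := FS_zero_val hσ h0n
      exact Fin.ext (show (kOf σ : ℕ) + 1 = (σ ⟨1, h1n⟩ : ℕ) by omega)
    · have hx' : (v : ℕ) - 2 < 2 * l := by omega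
      rw [ins_apply,
        show insFun l (kOf σ) (delOf σ hσ) v = insFun l (kOf σ) (delOf σ hσ) ⟨(v : ℕ), hv⟩ from
          congrArg _ (Fin.ext rfl),
        insFun_ge _ _ _ (by omega) hv hx']
      unfold delOf
      rw [del_apply, dmap_dinv]
      exact congrArg σ (Fin.ext (by simp only [val_mk]; omega))

lemma kOf_ins (k : Fin (2 * l + 1)) (σ' : Perm (Fin (2 * l))) : kOf (ins l k σ') = k := by
  have h1n : (1 : ℕ) < 2 * (l + 1) := by omega
  have hkb : (k : ℕ) + 1 < 2 * (l + 1) := by have := k.isLt; omega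
  have e := insFun_one k σ' h1n hkb
  have e2 : (ins l k σ' ⟨1, h1n⟩ : ℕ) = (k : ℕ) + 1 := by rw [ins_apply, e]
  have e3 := kOf_val (ins l k σ') h1n
  exact Fin.ext (by omega)

lemma delOf_ins (k : Fin (2 * l + 1)) (σ' : Perm (Fin (2 * l)))
    (hm : ins l k σ' ∈ FS (l + 1)) : delOf (ins l k σ') hm = σ' := by
  apply Equiv.ext
  intro j
  have hj := j.isLt
  have hj2 : (j : ℕ) + 2 < 2 * (l + 1) := by omega
  have e3 : ins l k σ' ⟨(j : ℕ) + 2, hj2⟩ = dmap l k (σ' j) := by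
    rw [ins_apply, insFun_ge _ _ _ (by omega) hj2 (by omega)]
    exact congrArg _ (congrArg σ' (Fin.ext (show (j : ℕ) + 2 - 2 = (j : ℕ) by omega)))
  unfold delOf
  rw [del_apply]
  rw [dinv_congr (kOf_ins k σ') e3 (dmap_ne0 k (σ' j)) (dmap_nek k (σ' j))]
  exact dinv_dmap k (σ' j) _ _


lemma kOf_succ {σ : Perm (Fin (2 * (l + 1)))} (hσ : σ ∈ FS (l + 1))
    (h1n : (1 : ℕ) < 2 * (l + 1)) : (kOf σ : ℕ) + 1 = (σ ⟨1, h1n⟩ : ℕ) := by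
  have h0n : (0 : ℕ) < 2 * (l + 1) := by omega
  have hk := kOf_val σ h1n
  have h01 := FS_pair hσ 0 (by omega) h0n h1n (by omega) (by omega)
  have hz := FS_zero_val hσ h0n
  omega

lemma dmap_delOf {σ : Perm (Fin (2 * (l + 1)))} (hσ : σ ∈ FS (l + 1)) (j : Fin (2 * l))
    (hx : (j : ℕ) + 2 < 2 * (l + 1)) :
    dmap l (kOf σ) (delOf σ hσ j) = σ ⟨(j : ℕ) + 2, hx⟩ := by
  unfold delOf
  rw [del_apply, dmap_dinv]

lemma step_value {σ : Perm (Fin (2 * (l + 1)))} (hσ : σ ∈ FS (l + 1))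
    (g : Fin (2 * (l + 1)) → Fin (2 * (l + 1)) → ℝ) :
    ∏ i : Fin (l + 1),
        g (σ ⟨2 * (i : ℕ), by have := i.isLt; omega⟩)
          (σ ⟨2 * (i : ℕ) + 1, by have := i.isLt; omega⟩)
      = g ⟨0, by omega⟩ ⟨(kOf σ : ℕ) + 1, by have := (kOf σ).isLt; omega⟩ *
          ∏ i : Fin l,
            g (dmap l (kOf σ) (delOf σ hσ ⟨2 * (i : ℕ), by have := i.isLt; omega⟩))
              (dmap l (kOf σ) (delOf σ hσ ⟨2 * (i : ℕ) + 1, by have := i.isLt; omega⟩)) := by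
  rw [Fin.prod_univ_succ]
  simp only [Fin.val_zero, Fin.val_succ, Nat.mul_zero, Nat.zero_add]
  congr 1
  · refine congrArg₂ g (Fin.ext ?_) (Fin.ext ?_)
    · exact FS_zero_val hσ _
    · exact (kOf_succ hσ _).symm
  · refine Finset.prod_congr rfl fun i _ => ?_
    refine congrArg₂ g ?_ ?_
    · refine ((dmap_delOf hσ ⟨2 * (i : ℕ), by have := i.isLt; omega⟩
        (by have := i.isLt; omega)).trans (congrArg σ (Fin.ext ?_))).symm
      show 2 * (i : ℕ) + 2 = 2 * ((i : ℕ) + 1)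
      omega
    · refine ((dmap_delOf hσ ⟨2 * (i : ℕ) + 1, by have := i.isLt; omega⟩
        (by have := i.isLt; omega)).trans (congrArg σ (Fin.ext ?_))).symm
      show 2 * (i : ℕ) + 1 + 2 = 2 * ((i : ℕ) + 1) + 1
      omega

lemma step (l : ℕ) (g : Fin (2 * (l + 1)) → Fin (2 * (l + 1)) → ℝ) :
    ∑ σ ∈ FS (l + 1), ∏ i : Fin (l + 1),
        g (σ ⟨2 * (i : ℕ), by have := i.isLt; omega⟩)
          (σ ⟨2 * (i : ℕ) + 1, by have := i.isLt; omega⟩)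
      = ∑ k : Fin (2 * l + 1),
          g ⟨0, by omega⟩ ⟨(k : ℕ) + 1, by have := k.isLt; omega⟩ *
            ∑ σ ∈ FS l, ∏ i : Fin l,
              g (dmap l k (σ ⟨2 * (i : ℕ), by have := i.isLt; omega⟩))
                (dmap l k (σ ⟨2 * (i : ℕ) + 1, by have := i.isLt; omega⟩)) := by
  simp only [Finset.mul_sum]
  rw [← Finset.sum_product']
  refine Finset.sum_bij' (fun σ hσ => (kOf σ, delOf σ hσ)) (fun p _ => ins l p.1 p.2)
    ?_ ?_ ?_ ?_ ?_
  · exact fun σ hσ => Finset.mem_product.mpr ⟨Finset.mem_univ _, delOf_mem hσ⟩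
  · exact fun p hp => ins_mem p.1 (Finset.mem_product.mp hp).2
  · exact fun σ hσ => ins_delOf hσ
  · intro p hp
    exact Prod.ext (kOf_ins p.1 p.2)
      (delOf_ins p.1 p.2 (ins_mem p.1 (Finset.mem_product.mp hp).2))
  · exact fun σ hσ => step_value hσ g


section Ident
variable {α : Type*} [DecidableEq α]

lemma idA (s : Finset α) (f : α → ℝ) (q : ℕ) :
    ∑ w ∈ s, ∑ t ∈ powersetCard q (s.erase w), ∏ i ∈ t, f i
      = ((s.card - q : ℕ) : ℝ) * ∑ t ∈ powersetCard q s, ∏ i ∈ t, f i := by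
  have h1 : ∀ w ∈ s, powersetCard q (s.erase w)
      = (powersetCard q s).filter (fun t => w ∉ t) := by
    intro w _
    ext t
    simp only [Finset.mem_powersetCard, Finset.mem_filter, Finset.subset_erase]
    tauto
  calc ∑ w ∈ s, ∑ t ∈ powersetCard q (s.erase w), ∏ i ∈ t, f i
      = ∑ w ∈ s, ∑ t ∈ powersetCard q s, if w ∉ t then ∏ i ∈ t, f i else 0 := by
        refine Finset.sum_congr rfl fun w hw => ?_
        rw [h1 w hw, Finset.sum_filter]
    _ = ∑ t ∈ powersetCard q s, ∑ w ∈ s, if w ∉ t then ∏ i ∈ t, f i else 0 :=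
        Finset.sum_comm
    _ = ∑ t ∈ powersetCard q s, ((s.card - q : ℕ) : ℝ) * ∏ i ∈ t, f i := by
        refine Finset.sum_congr rfl fun t ht => ?_
        obtain ⟨hsub, hcard⟩ := Finset.mem_powersetCard.mp ht
        rw [← Finset.sum_filter, Finset.sum_const, nsmul_eq_mul]
        congr 2
        rw [← Finset.sdiff_eq_filter, Finset.card_sdiff_of_subset hsub, hcard]
    _ = ((s.card - q : ℕ) : ℝ) * ∑ t ∈ powersetCard q s, ∏ i ∈ t, f i := by
        rw [Finset.mul_sum]

lemma idB (s : Finset α) (f : α → ℝ) (q : ℕ) :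
    ∑ w ∈ s, f w * ∑ t ∈ powersetCard q (s.erase w), ∏ i ∈ t, f i
      = ((q + 1 : ℕ) : ℝ) * ∑ t ∈ powersetCard (q + 1) s, ∏ i ∈ t, f i := by
  have hR : ((q + 1 : ℕ) : ℝ) * ∑ t ∈ powersetCard (q + 1) s, ∏ i ∈ t, f i
      = ∑ t ∈ powersetCard (q + 1) s, ∑ w ∈ t, ∏ i ∈ t, f i := by
    rw [Finset.mul_sum]
    refine Finset.sum_congr rfl fun t ht => ?_
    rw [Finset.sum_const, nsmul_eq_mul, (Finset.mem_powersetCard.mp ht).2]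
  have hL : ∀ w ∈ s, f w * ∑ t ∈ powersetCard q (s.erase w), ∏ i ∈ t, f i
      = ∑ t ∈ powersetCard q (s.erase w), f w * ∏ i ∈ t, f i := fun w _ =>
    Finset.mul_sum _ _ _
  rw [hR, Finset.sum_congr rfl hL, Finset.sum_sigma', Finset.sum_sigma']
  refine Finset.sum_bij' (fun x hx => (⟨insert x.1 x.2, x.1⟩ : (_ : Finset α) × α))
    (fun y hy => (⟨y.2, y.1.erase y.2⟩ : (_ : α) × Finset α)) ?_ ?_ ?_ ?_ ?_
  · intro x hx
    obtain ⟨hx1, hx2⟩ := Finset.mem_sigma.mp hx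
    obtain ⟨hsub, hcard⟩ := Finset.mem_powersetCard.mp hx2
    obtain ⟨hsub', hnot⟩ := Finset.subset_erase.mp hsub
    refine Finset.mem_sigma.mpr ⟨Finset.mem_powersetCard.mpr
      ⟨Finset.insert_subset hx1 hsub', ?_⟩, Finset.mem_insert_self _ _⟩
    rw [Finset.card_insert_of_notMem hnot, hcard]
  · intro y hy
    obtain ⟨hy1, hy2⟩ := Finset.mem_sigma.mp hy
    obtain ⟨hsub, hcard⟩ := Finset.mem_powersetCard.mp hy1
    refine Finset.mem_sigma.mpr ⟨hsub hy2, Finset.mem_powersetCard.mpr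
      ⟨Finset.erase_subset_erase _ hsub, ?_⟩⟩
    rw [Finset.card_erase_of_mem hy2, hcard]
    omega
  · intro x hx
    obtain ⟨hx1, hx2⟩ := Finset.mem_sigma.mp hx
    obtain ⟨hsub, hcard⟩ := Finset.mem_powersetCard.mp hx2
    obtain ⟨hsub', hnot⟩ := Finset.subset_erase.mp hsub
    have : (insert x.1 x.2).erase x.1 = x.2 := Finset.erase_insert hnot
    exact Sigma.ext rfl (heq_of_eq this)
  · intro y hy
    obtain ⟨hy1, hy2⟩ := Finset.mem_sigma.mp hy
    have : insert y.2 (y.1.erase y.2) = y.1 := Finset.insert_erase hy2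
    exact Sigma.ext this HEq.rfl
  · intro x hx
    obtain ⟨hx1, hx2⟩ := Finset.mem_sigma.mp hx
    obtain ⟨hsub, hcard⟩ := Finset.mem_powersetCard.mp hx2
    obtain ⟨hsub', hnot⟩ := Finset.subset_erase.mp hsub
    exact (Finset.prod_insert hnot).symm

lemma idC (s : Finset α) (f : α → ℝ) (a : α) (ha : a ∉ s) (q : ℕ) :
    ∑ t ∈ powersetCard (q + 1) (insert a s), ∏ i ∈ t, f i
      = (∑ t ∈ powersetCard (q + 1) s, ∏ i ∈ t, f i)
        + f a * ∑ t ∈ powersetCard q s, ∏ i ∈ t, f i := by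
  rw [Finset.powersetCard_succ_insert ha, Finset.sum_union, Finset.sum_image, Finset.mul_sum]
  · congr 1
    refine Finset.sum_congr rfl fun t ht => ?_
    have hnot : a ∉ t := fun h => ha ((Finset.mem_powersetCard.mp ht).1 h)
    rw [Finset.prod_insert hnot]
  · intro x hx y hy hxy
    have hax : a ∉ x := fun h => ha ((Finset.mem_powersetCard.mp hx).1 h)
    have hay : a ∉ y := fun h => ha ((Finset.mem_powersetCard.mp hy).1 h)
    rw [← Finset.erase_insert hax, ← Finset.erase_insert hay, hxy]
  · rw [Finset.disjoint_left]
    intro t h1 h2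
    obtain ⟨t', _, rfl⟩ := Finset.mem_image.mp h2
    exact ha ((Finset.mem_powersetCard.mp h1).1 (Finset.mem_insert_self _ _))

end Ident

lemma Dodd (p : ℕ) :
    Nat.doubleFactorial (2 * p - 1) * (2 * p + 1) = Nat.doubleFactorial (2 * p + 1) := by
  cases p with
  | zero => decide
  | succ p =>
    have h1 : 2 * (p + 1) - 1 = 2 * p + 1 := by omega
    have h2 : 2 * (p + 1) + 1 = (2 * p + 1) + 2 := by omega
    rw [h1, h2, Nat.doubleFactorial_add_two]
    ring

lemma arith (l : ℕ) (c x : ℝ) (A : ℕ → ℝ) (htop : A (2 * l + 2) = 0) :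
    ∑ p ∈ range (l + 1),
        ((Nat.doubleFactorial (2 * l - 2 * p - 1) * Nat.doubleFactorial (2 * p - 1) : ℕ) : ℝ)
          * c ^ (l - p) *
          (c * ((2 * l + 1 - 2 * p : ℕ) : ℝ) * A (2 * p)
            + x * ((2 * p + 1 : ℕ) : ℝ) * A (2 * p + 1))
      = (∑ p ∈ range (l + 1),
          ((Nat.doubleFactorial (2 * (l + 1) - 2 * (p + 1) - 1)
              * Nat.doubleFactorial (2 * (p + 1) - 1) : ℕ) : ℝ)
            * c ^ (l + 1 - (p + 1)) * (A (2 * (p + 1)) + x * A (2 * p + 1)))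
        + ((Nat.doubleFactorial (2 * (l + 1) - 2 * 0 - 1)
            * Nat.doubleFactorial (2 * 0 - 1) : ℕ) : ℝ) * c ^ (l + 1 - 0) * A (2 * 0) := by
  have hLHS : ∑ p ∈ range (l + 1),
        ((Nat.doubleFactorial (2 * l - 2 * p - 1) * Nat.doubleFactorial (2 * p - 1) : ℕ) : ℝ)
          * c ^ (l - p) *
          (c * ((2 * l + 1 - 2 * p : ℕ) : ℝ) * A (2 * p)
            + x * ((2 * p + 1 : ℕ) : ℝ) * A (2 * p + 1))
      = ∑ p ∈ range (l + 1),
          (((Nat.doubleFactorial (2 * l + 1 - 2 * p) * Nat.doubleFactorial (2 * p - 1) : ℕ) : ℝ)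
              * c ^ (l + 1 - p) * A (2 * p)
            + ((Nat.doubleFactorial (2 * l - 2 * p - 1)
                * Nat.doubleFactorial (2 * p + 1) : ℕ) : ℝ)
              * c ^ (l - p) * (x * A (2 * p + 1))) := by
    refine Finset.sum_congr rfl fun p hp => ?_
    have hp' : p < l + 1 := Finset.mem_range.mp hp
    have h1 : 2 * l - 2 * p - 1 = 2 * (l - p) - 1 := by omega
    have h2 : 2 * l + 1 - 2 * p = 2 * (l - p) + 1 := by omega
    have h3 : l + 1 - p = (l - p) + 1 := by omega
    rw [h1, h2, h3, ← Dodd (l - p), ← Dodd p]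
    push_cast
    ring
  rw [hLHS, Finset.sum_add_distrib]
  have hF : ∑ p ∈ range (l + 1),
        ((Nat.doubleFactorial (2 * l + 1 - 2 * p) * Nat.doubleFactorial (2 * p - 1) : ℕ) : ℝ)
          * c ^ (l + 1 - p) * A (2 * p)
      = (∑ p ∈ range l,
          ((Nat.doubleFactorial (2 * l + 1 - 2 * (p + 1))
              * Nat.doubleFactorial (2 * (p + 1) - 1) : ℕ) : ℝ)
            * c ^ (l + 1 - (p + 1)) * A (2 * (p + 1)))
        + ((Nat.doubleFactorial (2 * l + 1 - 2 * 0) * Nat.doubleFactorial (2 * 0 - 1) : ℕ) : ℝ)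
          * c ^ (l + 1 - 0) * A (2 * 0) := Finset.sum_range_succ' _ l
  rw [hF]
  have hC : ∑ p ∈ range (l + 1),
        ((Nat.doubleFactorial (2 * (l + 1) - 2 * (p + 1) - 1)
            * Nat.doubleFactorial (2 * (p + 1) - 1) : ℕ) : ℝ)
          * c ^ (l + 1 - (p + 1)) * (A (2 * (p + 1)) + x * A (2 * p + 1))
      = (∑ p ∈ range (l + 1),
          ((Nat.doubleFactorial (2 * (l + 1) - 2 * (p + 1) - 1)
              * Nat.doubleFactorial (2 * (p + 1) - 1) : ℕ) : ℝ)
            * c ^ (l + 1 - (p + 1)) * A (2 * (p + 1)))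
        + ∑ p ∈ range (l + 1),
          ((Nat.doubleFactorial (2 * (l + 1) - 2 * (p + 1) - 1)
              * Nat.doubleFactorial (2 * (p + 1) - 1) : ℕ) : ℝ)
            * c ^ (l + 1 - (p + 1)) * (x * A (2 * p + 1)) := by
    rw [← Finset.sum_add_distrib]
    exact Finset.sum_congr rfl fun p _ => by ring
  rw [hC]
  have hCe : ∑ p ∈ range (l + 1),
        ((Nat.doubleFactorial (2 * (l + 1) - 2 * (p + 1) - 1)
            * Nat.doubleFactorial (2 * (p + 1) - 1) : ℕ) : ℝ)
          * c ^ (l + 1 - (p + 1)) * A (2 * (p + 1))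
      = ∑ p ∈ range l,
          ((Nat.doubleFactorial (2 * (l + 1) - 2 * (p + 1) - 1)
              * Nat.doubleFactorial (2 * (p + 1) - 1) : ℕ) : ℝ)
            * c ^ (l + 1 - (p + 1)) * A (2 * (p + 1)) := by
    rw [Finset.sum_range_succ]
    have hz : A (2 * (l + 1)) = 0 := htop
    rw [hz, mul_zero, add_zero]
  rw [hCe]
  have e1 : ∀ p : ℕ, 2 * l + 1 - 2 * (p + 1) = 2 * (l + 1) - 2 * (p + 1) - 1 := fun p => by omega
  have e2 : 2 * l + 1 - 2 * 0 = 2 * (l + 1) - 2 * 0 - 1 := by omega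
  have hmatch1 : ∀ p ∈ range l,
      ((Nat.doubleFactorial (2 * l + 1 - 2 * (p + 1))
          * Nat.doubleFactorial (2 * (p + 1) - 1) : ℕ) : ℝ)
        * c ^ (l + 1 - (p + 1)) * A (2 * (p + 1))
      = ((Nat.doubleFactorial (2 * (l + 1) - 2 * (p + 1) - 1)
          * Nat.doubleFactorial (2 * (p + 1) - 1) : ℕ) : ℝ)
        * c ^ (l + 1 - (p + 1)) * A (2 * (p + 1)) := fun p _ => by rw [e1 p]
  have hmatch2 : ∀ p ∈ range (l + 1),
      ((Nat.doubleFactorial (2 * l - 2 * p - 1) * Nat.doubleFactorial (2 * p + 1) : ℕ) : ℝ)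
        * c ^ (l - p) * (x * A (2 * p + 1))
      = ((Nat.doubleFactorial (2 * (l + 1) - 2 * (p + 1) - 1)
          * Nat.doubleFactorial (2 * (p + 1) - 1) : ℕ) : ℝ)
        * c ^ (l + 1 - (p + 1)) * (x * A (2 * p + 1)) := by
    intro p _
    have e3 : 2 * l - 2 * p - 1 = 2 * (l + 1) - 2 * (p + 1) - 1 := by omega
    have e4 : 2 * p + 1 = 2 * (p + 1) - 1 := by omega
    have e5 : l - p = l + 1 - (p + 1) := by omega
    rw [e3, e4, e5]
  rw [Finset.sum_congr rfl hmatch1, Finset.sum_congr rfl hmatch2, e2]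
  ring


lemma image_dmap (l : ℕ) (k : Fin (2 * l + 1)) (h0 : (0 : ℕ) < 2 * (l + 1))
    (hk1 : (k : ℕ) + 1 < 2 * (l + 1)) :
    Finset.map ⟨dmap l k, dmap_inj k⟩ (univ : Finset (Fin (2 * l)))
      = ((univ : Finset (Fin (2 * (l + 1)))).erase ⟨0, h0⟩).erase ⟨(k : ℕ) + 1, hk1⟩ := by
  ext v
  simp only [Finset.mem_map, Finset.mem_erase, Finset.mem_univ, and_true,
    Function.Embedding.coeFn_mk]
  constructor
  · rintro ⟨a, _, rfl⟩
    exact ⟨fun h => dmap_nek k a (congrArg Fin.val h),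
      fun h => dmap_ne0 k a (congrArg Fin.val h)⟩
  · rintro ⟨h1, h2⟩
    have hv0 : (v : ℕ) ≠ 0 := fun h => h2 (Fin.ext h)
    have hv1 : (v : ℕ) ≠ (k : ℕ) + 1 := fun h => h1 (Fin.ext h)
    exact ⟨dinv l k v hv0 hv1, trivial, dmap_dinv k v hv0 hv1⟩

lemma hps (l : ℕ) (k : Fin (2 * l + 1)) (lam : Fin (2 * (l + 1)) → ℝ) (n : ℕ)
    (h0 : (0 : ℕ) < 2 * (l + 1)) (hk1 : (k : ℕ) + 1 < 2 * (l + 1)) :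
    ∑ s ∈ powersetCard n (univ : Finset (Fin (2 * l))), ∏ i ∈ s, lam (dmap l k i)
      = ∑ t ∈ powersetCard n
          (((univ : Finset (Fin (2 * (l + 1)))).erase ⟨0, h0⟩).erase ⟨(k : ℕ) + 1, hk1⟩),
          ∏ i ∈ t, lam i := by
  rw [← image_dmap l k h0 hk1, Finset.powersetCard_map, Finset.sum_map]
  refine Finset.sum_congr rfl fun s _ => ?_
  have he : (Finset.mapEmbedding (⟨dmap l k, dmap_inj k⟩ : Fin (2 * l) ↪ Fin (2 * (l + 1)))).toEmbedding s
      = s.map ⟨dmap l k, dmap_inj k⟩ := rfl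
  rw [he, Finset.prod_map]
  rfl

lemma key (c : ℝ) : ∀ (l : ℕ) (lam : Fin (2 * l) → ℝ),
    ∑ σ ∈ FS l, ∏ i : Fin l,
        (c + lam (σ ⟨2 * (i : ℕ), by have := i.isLt; omega⟩) *
          lam (σ ⟨2 * (i : ℕ) + 1, by have := i.isLt; omega⟩))
      = ∑ p ∈ range (l + 1),
          ((Nat.doubleFactorial (2 * l - 2 * p - 1) * Nat.doubleFactorial (2 * p - 1) : ℕ) : ℝ)
            * c ^ (l - p) *
            ∑ s ∈ powersetCard (2 * p) (univ : Finset (Fin (2 * l))), ∏ i ∈ s, lam i := by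
  intro l
  induction l with
  | zero =>
    intro lam
    have h1 : FS 0 = {1} := by
      apply Finset.eq_singleton_iff_unique_mem.mpr
      constructor
      · exact mem_FS.mpr ⟨fun i => absurd i.isLt (by omega), fun i j _ => absurd i.isLt (by omega)⟩
      · intro σ _
        exact Equiv.ext fun x => absurd x.isLt (by omega)
    rw [h1, Finset.sum_singleton, Finset.sum_range_one]
    simp [Nat.doubleFactorial]
  | succ l ih =>
    intro lam
    have h0n : (0 : ℕ) < 2 * (l + 1) := by omega
    have hcard : ((univ : Finset (Fin (2 * (l + 1)))).erase ⟨0, h0n⟩).card = 2 * l + 1 := by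
      rw [Finset.card_erase_of_mem (Finset.mem_univ _), Finset.card_univ, Fintype.card_fin]
      omega
    have htop : ∑ t ∈ powersetCard (2 * l + 2)
        ((univ : Finset (Fin (2 * (l + 1)))).erase ⟨0, h0n⟩), ∏ i ∈ t, lam i = 0 := by
      rw [Finset.powersetCard_eq_empty.mpr (by rw [hcard]; omega), Finset.sum_empty]
    calc
      ∑ σ ∈ FS (l + 1), ∏ i : Fin (l + 1),
          (c + lam (σ ⟨2 * (i : ℕ), by have := i.isLt; omega⟩) *
            lam (σ ⟨2 * (i : ℕ) + 1, by have := i.isLt; omega⟩))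
        = ∑ k : Fin (2 * l + 1),
            (c + lam ⟨0, by omega⟩ * lam ⟨(k : ℕ) + 1, by have := k.isLt; omega⟩) *
              ∑ σ ∈ FS l, ∏ i : Fin l,
                (c + lam (dmap l k (σ ⟨2 * (i : ℕ), by have := i.isLt; omega⟩)) *
                  lam (dmap l k (σ ⟨2 * (i : ℕ) + 1, by have := i.isLt; omega⟩))) :=
          step l (fun a b => c + lam a * lam b)
      _ = ∑ k : Fin (2 * l + 1),
            (c + lam ⟨0, by omega⟩ * lam ⟨(k : ℕ) + 1, by have := k.isLt; omega⟩) *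
              ∑ p ∈ range (l + 1),
                ((Nat.doubleFactorial (2 * l - 2 * p - 1)
                    * Nat.doubleFactorial (2 * p - 1) : ℕ) : ℝ) * c ^ (l - p) *
                  ∑ s ∈ powersetCard (2 * p) (univ : Finset (Fin (2 * l))),
                    ∏ i ∈ s, lam (dmap l k i) := by
          refine Finset.sum_congr rfl fun k _ => ?_
          exact congrArg _ (ih (fun v => lam (dmap l k v)))
      _ = ∑ k : Fin (2 * l + 1),
            (c + lam ⟨0, by omega⟩ * lam ⟨(k : ℕ) + 1, by have := k.isLt; omega⟩) *
              ∑ p ∈ range (l + 1),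
                ((Nat.doubleFactorial (2 * l - 2 * p - 1)
                    * Nat.doubleFactorial (2 * p - 1) : ℕ) : ℝ) * c ^ (l - p) *
                  ∑ t ∈ powersetCard (2 * p)
                      (((univ : Finset (Fin (2 * (l + 1)))).erase ⟨0, h0n⟩).erase
                        ⟨(k : ℕ) + 1, by have := k.isLt; omega⟩),
                    ∏ i ∈ t, lam i := by
          refine Finset.sum_congr rfl fun k _ => congrArg _ (Finset.sum_congr rfl fun p _ =>
            congrArg _ (hps l k lam (2 * p) h0n (by have := k.isLt; omega)))
      _ = ∑ w ∈ (univ : Finset (Fin (2 * (l + 1)))).erase ⟨0, h0n⟩,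
            (c + lam ⟨0, h0n⟩ * lam w) *
              ∑ p ∈ range (l + 1),
                ((Nat.doubleFactorial (2 * l - 2 * p - 1)
                    * Nat.doubleFactorial (2 * p - 1) : ℕ) : ℝ) * c ^ (l - p) *
                  ∑ t ∈ powersetCard (2 * p)
                      (((univ : Finset (Fin (2 * (l + 1)))).erase ⟨0, h0n⟩).erase w),
                    ∏ i ∈ t, lam i := by
          refine Finset.sum_bij'
            (fun k _ => (⟨(k : ℕ) + 1, by have := k.isLt; omega⟩ : Fin (2 * (l + 1))))
            (fun w _ => (⟨(w : ℕ) - 1, by have := w.isLt; omega⟩ : Fin (2 * l + 1)))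
            ?_ ?_ ?_ ?_ ?_
          · intro k _
            refine Finset.mem_erase.mpr ⟨fun h => ?_, Finset.mem_univ _⟩
            have := congrArg Fin.val h
            simp only [val_mk] at this
            omega
          · exact fun w _ => Finset.mem_univ _
          · intro k _
            exact Fin.ext (by simp only [val_mk]; omega)
          · intro w hw
            have hne : (w : ℕ) ≠ 0 := fun h => (Finset.mem_erase.mp hw).1 (Fin.ext h)
            exact Fin.ext (by simp only [val_mk]; omega)
          · exact fun k _ => rfl
      _ = ∑ p ∈ range (l + 1),
            ((Nat.doubleFactorial (2 * l - 2 * p - 1)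
                * Nat.doubleFactorial (2 * p - 1) : ℕ) : ℝ) * c ^ (l - p) *
              (c * ((2 * l + 1 - 2 * p : ℕ) : ℝ) *
                  (∑ t ∈ powersetCard (2 * p)
                    ((univ : Finset (Fin (2 * (l + 1)))).erase ⟨0, h0n⟩), ∏ i ∈ t, lam i)
                + lam ⟨0, h0n⟩ * ((2 * p + 1 : ℕ) : ℝ) *
                  (∑ t ∈ powersetCard (2 * p + 1)
                    ((univ : Finset (Fin (2 * (l + 1)))).erase ⟨0, h0n⟩), ∏ i ∈ t, lam i)) := by
          rw [Finset.sum_congr rfl (fun w _ => Finset.mul_sum _ _ _), Finset.sum_comm]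
          refine Finset.sum_congr rfl fun p _ => ?_
          calc
            ∑ w ∈ (univ : Finset (Fin (2 * (l + 1)))).erase ⟨0, h0n⟩,
                (c + lam ⟨0, h0n⟩ * lam w) *
                  (((Nat.doubleFactorial (2 * l - 2 * p - 1)
                      * Nat.doubleFactorial (2 * p - 1) : ℕ) : ℝ) * c ^ (l - p) *
                    ∑ t ∈ powersetCard (2 * p)
                      (((univ : Finset (Fin (2 * (l + 1)))).erase ⟨0, h0n⟩).erase w),
                      ∏ i ∈ t, lam i)
              = ∑ w ∈ (univ : Finset (Fin (2 * (l + 1)))).erase ⟨0, h0n⟩,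
                  ((c * (((Nat.doubleFactorial (2 * l - 2 * p - 1)
                      * Nat.doubleFactorial (2 * p - 1) : ℕ) : ℝ) * c ^ (l - p))) *
                    (∑ t ∈ powersetCard (2 * p)
                      (((univ : Finset (Fin (2 * (l + 1)))).erase ⟨0, h0n⟩).erase w),
                      ∏ i ∈ t, lam i)
                  + (lam ⟨0, h0n⟩ * (((Nat.doubleFactorial (2 * l - 2 * p - 1)
                      * Nat.doubleFactorial (2 * p - 1) : ℕ) : ℝ) * c ^ (l - p))) *
                    (lam w * ∑ t ∈ powersetCard (2 * p)
                      (((univ : Finset (Fin (2 * (l + 1)))).erase ⟨0, h0n⟩).erase w),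
                      ∏ i ∈ t, lam i)) :=
                Finset.sum_congr rfl fun w _ => by ring
            _ = (c * (((Nat.doubleFactorial (2 * l - 2 * p - 1)
                    * Nat.doubleFactorial (2 * p - 1) : ℕ) : ℝ) * c ^ (l - p))) *
                  (∑ w ∈ (univ : Finset (Fin (2 * (l + 1)))).erase ⟨0, h0n⟩,
                    ∑ t ∈ powersetCard (2 * p)
                      (((univ : Finset (Fin (2 * (l + 1)))).erase ⟨0, h0n⟩).erase w),
                      ∏ i ∈ t, lam i)
                + (lam ⟨0, h0n⟩ * (((Nat.doubleFactorial (2 * l - 2 * p - 1)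
                    * Nat.doubleFactorial (2 * p - 1) : ℕ) : ℝ) * c ^ (l - p))) *
                  (∑ w ∈ (univ : Finset (Fin (2 * (l + 1)))).erase ⟨0, h0n⟩,
                    lam w * ∑ t ∈ powersetCard (2 * p)
                      (((univ : Finset (Fin (2 * (l + 1)))).erase ⟨0, h0n⟩).erase w),
                      ∏ i ∈ t, lam i) := by
                rw [Finset.sum_add_distrib, ← Finset.mul_sum, ← Finset.mul_sum]
            _ = ((Nat.doubleFactorial (2 * l - 2 * p - 1)
                    * Nat.doubleFactorial (2 * p - 1) : ℕ) : ℝ) * c ^ (l - p) *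
                  (c * ((2 * l + 1 - 2 * p : ℕ) : ℝ) *
                      (∑ t ∈ powersetCard (2 * p)
                        ((univ : Finset (Fin (2 * (l + 1)))).erase ⟨0, h0n⟩), ∏ i ∈ t, lam i)
                    + lam ⟨0, h0n⟩ * ((2 * p + 1 : ℕ) : ℝ) *
                      (∑ t ∈ powersetCard (2 * p + 1)
                        ((univ : Finset (Fin (2 * (l + 1)))).erase ⟨0, h0n⟩),
                        ∏ i ∈ t, lam i)) := by
                rw [idA _ lam (2 * p), idB _ lam (2 * p), hcard]
                ring
      _ = (∑ p ∈ range (l + 1),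
            ((Nat.doubleFactorial (2 * (l + 1) - 2 * (p + 1) - 1)
                * Nat.doubleFactorial (2 * (p + 1) - 1) : ℕ) : ℝ) * c ^ (l + 1 - (p + 1)) *
              ((∑ t ∈ powersetCard (2 * (p + 1))
                  ((univ : Finset (Fin (2 * (l + 1)))).erase ⟨0, h0n⟩), ∏ i ∈ t, lam i)
                + lam ⟨0, h0n⟩ *
                  ∑ t ∈ powersetCard (2 * p + 1)
                    ((univ : Finset (Fin (2 * (l + 1)))).erase ⟨0, h0n⟩), ∏ i ∈ t, lam i))
          + ((Nat.doubleFactorial (2 * (l + 1) - 2 * 0 - 1)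
              * Nat.doubleFactorial (2 * 0 - 1) : ℕ) : ℝ) * c ^ (l + 1 - 0) *
            ∑ t ∈ powersetCard (2 * 0)
              ((univ : Finset (Fin (2 * (l + 1)))).erase ⟨0, h0n⟩), ∏ i ∈ t, lam i :=
          arith l c (lam ⟨0, h0n⟩)
            (fun q => ∑ t ∈ powersetCard q
              ((univ : Finset (Fin (2 * (l + 1)))).erase ⟨0, h0n⟩), ∏ i ∈ t, lam i) htop
      _ = ∑ p ∈ range (l + 1 + 1),
            ((Nat.doubleFactorial (2 * (l + 1) - 2 * p - 1)
                * Nat.doubleFactorial (2 * p - 1) : ℕ) : ℝ) * c ^ (l + 1 - p) *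
              ∑ s ∈ powersetCard (2 * p) (univ : Finset (Fin (2 * (l + 1)))),
                ∏ i ∈ s, lam i := by
          rw [Finset.sum_range_succ' _ (l + 1)]
          congr 1
          · refine Finset.sum_congr rfl fun p _ => ?_
            refine congrArg _ ?_
            have hsplit := idC ((univ : Finset (Fin (2 * (l + 1)))).erase ⟨0, h0n⟩) lam
              ⟨0, h0n⟩ (Finset.notMem_erase _ _) (2 * p + 1)
            rw [show insert (⟨0, h0n⟩ : Fin (2 * (l + 1)))
                ((univ : Finset (Fin (2 * (l + 1)))).erase ⟨0, h0n⟩)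
                = (univ : Finset (Fin (2 * (l + 1))))
              from Finset.insert_erase (Finset.mem_univ _)] at hsplit
            exact hsplit.symm
          · refine congrArg _ ?_
            simp [Finset.powersetCard_zero]


lemma prod_pairs {A : Type*} [Monoid A] : ∀ (l : ℕ) (a : Fin (2 * l) → A),
    (List.ofFn (fun i : Fin l => a ⟨2 * (i : ℕ), by have := i.isLt; omega⟩ *
        a ⟨2 * (i : ℕ) + 1, by have := i.isLt; omega⟩)).prod
      = (List.ofFn a).prod := by
  intro l
  induction l with
  | zero =>
    intro a
    rfl
  | succ l ih =>
    intro a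
    rw [List.ofFn_succ', List.prod_concat]
    rw [show (List.ofFn a)
        = ((List.ofFn (fun i : Fin (2 * l + 1) => a i.castSucc)).concat (a (Fin.last (2 * l + 1))))
      from List.ofFn_succ' a]
    rw [List.prod_concat]
    rw [show (List.ofFn (fun i : Fin (2 * l + 1) => a i.castSucc))
        = ((List.ofFn (fun i : Fin (2 * l) => a i.castSucc.castSucc)).concat
            (a (Fin.last (2 * l)).castSucc))
      from List.ofFn_succ' _]
    rw [List.prod_concat]
    have hfun : (fun i : Fin l =>
        (fun j : Fin (l + 1) => a ⟨2 * (j : ℕ), by have := j.isLt; omega⟩ *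
          a ⟨2 * (j : ℕ) + 1, by have := j.isLt; omega⟩) i.castSucc)
        = (fun i : Fin l =>
            (fun v : Fin (2 * l) => a v.castSucc.castSucc) ⟨2 * (i : ℕ), by have := i.isLt; omega⟩ *
            (fun v : Fin (2 * l) => a v.castSucc.castSucc)
              ⟨2 * (i : ℕ) + 1, by have := i.isLt; omega⟩) := by
      funext i
      exact congrArg₂ (· * ·) (congrArg a (Fin.ext (by simp)))
        (congrArg a (Fin.ext (by simp)))
    rw [hfun, ih (fun v : Fin (2 * l) => a v.castSucc.castSucc), ← mul_assoc]
    exact congrArg₂ (· * ·)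
      (congrArg₂ (· * ·) rfl (congrArg a (Fin.ext (by simp))))
      (congrArg a (Fin.ext (by simp)))

lemma ofFn_smul_prod {A : Type*} [Ring A] [Algebra ℝ A] :
    ∀ (m : ℕ) (f : Fin m → ℝ) (g : Fin m → A),
    (List.ofFn (fun i => f i • g i)).prod = (∏ i, f i) • (List.ofFn g).prod := by
  intro m
  induction m with
  | zero => intro f g; simp
  | succ m ih =>
    intro f g
    rw [List.ofFn_succ, List.ofFn_succ, List.prod_cons, List.prod_cons,
      ih (fun i => f i.succ) (fun i => g i.succ), Fin.prod_univ_succ, smul_mul_smul_comm]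

lemma prod_eVec_perm (n : ℕ) (σ : Perm (Fin n)) :
    (List.ofFn (fun j : Fin n => eVec n (σ j))).prod
      = ((Perm.sign σ : ℤ) : ℝ) • topForm n := by
  have h := AlternatingMap.map_perm (g := ExteriorAlgebra.ιMulti ℝ n)
    (fun i : Fin n => (Pi.single i 1 : Fin n → ℝ)) σ
  have h2 : (List.ofFn (fun j : Fin n => eVec n (σ j))).prod
      = ExteriorAlgebra.ιMulti ℝ n ((fun i : Fin n => (Pi.single i 1 : Fin n → ℝ)) ∘ σ) := by
    rw [ExteriorAlgebra.ιMulti_apply]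
    rfl
  have h3 : ExteriorAlgebra.ιMulti ℝ n (fun i : Fin n => (Pi.single i 1 : Fin n → ℝ))
      = topForm n := by
    rw [ExteriorAlgebra.ιMulti_apply, List.ofFn_eq_map]
    rfl
  rw [h2, h, h3, Units.smul_def, ← Int.cast_smul_eq_zsmul ℝ]

end AW

/-- Allendoerfer–Weil: for `n = 2l` and the skew-symmetric matrix of `2`-forms
`Ω_{ij} = (c + λᵢλⱼ) eⁱ∧eʲ`, one has
`Pf(Ω) = [∑_{p=0}^{l} (2l-2p-1)!!(2p-1)!! c^{l-p} S_{2p}(λ)] e¹∧⋯∧eⁿ`,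
where `S_{2p}` is the elementary symmetric polynomial of degree `2p`. -/
theorem pfaffian_curvature_matrix (l : ℕ) (hl : 1 ≤ l) (c : ℝ) (lam : Fin (2 * l) → ℝ) :
    pfaffian l
        (Matrix.of fun i j : Fin (2 * l) =>
          (c + lam i * lam j) • (eVec (2 * l) i * eVec (2 * l) j)) =
      (∑ p ∈ range (l + 1),
          ((Nat.doubleFactorial (2 * l - 2 * p - 1) * Nat.doubleFactorial (2 * p - 1) : ℕ) : ℝ)
            * c ^ (l - p) *
            ∑ s ∈ powersetCard (2 * p) (univ : Finset (Fin (2 * l))), ∏ i ∈ s, lam i)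
        • topForm (2 * l) := by
  have hterm : ∀ σ ∈ AW.FS l,
      (Perm.sign σ : ℤ) •
        ((List.finRange l).map (fun i : Fin l =>
          (Matrix.of fun a b : Fin (2 * l) =>
            (c + lam a * lam b) • (eVec (2 * l) a * eVec (2 * l) b))
            (σ ⟨2 * (i : ℕ), by have := i.isLt; omega⟩)
            (σ ⟨2 * (i : ℕ) + 1, by have := i.isLt; omega⟩))).prod
      = (∏ i : Fin l, (c + lam (σ ⟨2 * (i : ℕ), by have := i.isLt; omega⟩) *
          lam (σ ⟨2 * (i : ℕ) + 1, by have := i.isLt; omega⟩))) • topForm (2 * l) := by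
    intro σ _
    have hs : ((Perm.sign σ : ℤ) : ℝ) * ((Perm.sign σ : ℤ) : ℝ) = 1 := by
      rw [← Int.cast_mul, Int.units_coe_mul_self, Int.cast_one]
    simp only [Matrix.of_apply, ← List.ofFn_eq_map]
    rw [AW.ofFn_smul_prod, AW.prod_pairs l (fun j : Fin (2 * l) => eVec (2 * l) (σ j)),
      AW.prod_eVec_perm (2 * l) σ, ← Int.cast_smul_eq_zsmul ℝ, smul_smul, smul_smul]
    congr 1
    rw [mul_comm, ← mul_assoc, hs, one_mul]
  calc pfaffian l
        (Matrix.of fun i j : Fin (2 * l) =>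
          (c + lam i * lam j) • (eVec (2 * l) i * eVec (2 * l) j))
      = ∑ σ ∈ AW.FS l, (∏ i : Fin l, (c + lam (σ ⟨2 * (i : ℕ), by have := i.isLt; omega⟩) *
          lam (σ ⟨2 * (i : ℕ) + 1, by have := i.isLt; omega⟩))) • topForm (2 * l) :=
        Finset.sum_congr rfl hterm
    _ = (∑ σ ∈ AW.FS l, ∏ i : Fin l, (c + lam (σ ⟨2 * (i : ℕ), by have := i.isLt; omega⟩) *
          lam (σ ⟨2 * (i : ℕ) + 1, by have := i.isLt; omega⟩))) • topForm (2 * l) :=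
        (Finset.sum_smul).symm
    _ = _ := congrArg (· • topForm (2 * l)) (AW.key c l lam)
end

section
/- Let n = 2l, c, λ, μ real numbers, and let Ω be the skew-symmetric matrix of 2-forms with Ω_{ij} = (c + νᵢνⱼ) eⁱ∧eʲ where ν₁ = λ and ν₂ = ⋯ = νₙ = μ. Then Pf(Ω) = (2l-1)!! (c + λμ)(c + μ²)^{l-1} · e¹∧⋯∧eⁿ. -/
open Finset Equiv

namespace PfAux

/-- The canonical-matching predicate appearing in the definition of the Pfaffian. -/
abbrev Pc (m : ℕ) (σ : Perm (Fin (2 * m))) : Prop :=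
  (∀ i : Fin m, σ ⟨2 * i, by have := i.isLt; omega⟩ < σ ⟨2 * i + 1, by have := i.isLt; omega⟩) ∧
  (∀ i j : Fin m, i < j →
    σ ⟨2 * i, by have := i.isLt; omega⟩ < σ ⟨2 * j, by have := j.isLt; omega⟩)

variable {n : ℕ}

/-- Insert `q` as image of `0`, renumbering the rest monotonically. -/
def insPerm (q : Fin (n + 1)) (e : Perm (Fin n)) : Perm (Fin (n + 1)) :=
  (finSuccEquiv n).trans ((Equiv.optionCongr e).trans (finSuccEquiv' q).symm)

@[simp] lemma insPerm_zero (q : Fin (n + 1)) (e : Perm (Fin n)) : insPerm q e 0 = q := by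
  simp [insPerm]

@[simp] lemma insPerm_succ (q : Fin (n + 1)) (e : Perm (Fin n)) (i : Fin n) :
    insPerm q e i.succ = q.succAbove (e i) := by
  simp [insPerm]

/-- Inverse to `insPerm`. -/
def extPerm (σ : Perm (Fin (n + 1))) : Perm (Fin n) :=
  Equiv.removeNone ((finSuccEquiv n).symm.trans (σ.trans (finSuccEquiv' (σ 0))))

lemma extPerm_apply (σ : Perm (Fin (n + 1))) (i : Fin n) :
    (σ 0).succAbove (extPerm σ i) = σ i.succ := by
  have hne : σ i.succ ≠ σ 0 := fun h => Fin.succ_ne_zero i (σ.injective h)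
  obtain ⟨j, hj⟩ := Fin.exists_succAbove_eq hne
  have hc : ((finSuccEquiv n).symm.trans (σ.trans (finSuccEquiv' (σ 0)))) (some i) = some j := by
    rw [Equiv.trans_apply, Equiv.trans_apply, finSuccEquiv_symm_some, ← hj,
      finSuccEquiv'_succAbove]
  have h2 : extPerm σ i = j := by
    unfold extPerm
    exact Option.some_injective _
      ((Equiv.removeNone_some ((finSuccEquiv n).symm.trans (σ.trans (finSuccEquiv' (σ 0))))
        ⟨j, hc⟩).trans hc)
  rw [h2, hj]

lemma insPerm_extPerm (σ : Perm (Fin (n + 1))) : insPerm (σ 0) (extPerm σ) = σ := by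
  apply Equiv.ext
  intro x
  refine Fin.cases ?_ ?_ x
  · rw [insPerm_zero]
  · intro i
    rw [insPerm_succ, extPerm_apply]

lemma extPerm_insPerm (q : Fin (n + 1)) (e : Perm (Fin n)) : extPerm (insPerm q e) = e := by
  apply Equiv.ext
  intro i
  have h := extPerm_apply (insPerm q e) i
  rw [insPerm_succ, insPerm_zero] at h
  exact (Fin.strictMono_succAbove q).injective h

lemma Pc_zero {m : ℕ} {σ : Perm (Fin (2 * (m + 1)))} (h : Pc (m + 1) σ) :
    σ ⟨0, by omega⟩ = ⟨0, by omega⟩ := by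
  obtain ⟨h1, h2⟩ := h
  have hle : ∀ y : Fin (2 * (m + 1)), σ ⟨0, by omega⟩ ≤ σ y := by
    intro y
    by_cases h0 : (y : ℕ) = 0
    · rw [show y = ⟨0, by omega⟩ from Fin.ext_iff.mpr h0]
    · have hyd : ((y : ℕ)) / 2 < m + 1 := by have := y.isLt; omega
      rcases Nat.even_or_odd (y : ℕ) with he | ho
      · have hy2 : (y : ℕ) = 2 * ((y : ℕ) / 2) := by
          obtain ⟨c, hc⟩ := he; omega
        refine le_of_lt ?_
        rw [show y = ⟨2 * ((y : ℕ) / 2), by omega⟩ from Fin.ext_iff.mpr hy2]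
        exact h2 ⟨0, by omega⟩ ⟨(y : ℕ) / 2, hyd⟩ (Fin.mk_lt_mk.mpr (by omega))
      · have hy2 : (y : ℕ) = 2 * ((y : ℕ) / 2) + 1 := by
          obtain ⟨c, hc⟩ := ho; omega
        rw [show y = ⟨2 * ((y : ℕ) / 2) + 1, by omega⟩ from Fin.ext_iff.mpr hy2]
        have hstep : σ ⟨0, by omega⟩ ≤ σ ⟨2 * ((y : ℕ) / 2), by omega⟩ := by
          by_cases hq : (y : ℕ) / 2 = 0
          · refine le_of_eq ?_
            congr 1
            exact Fin.mk_eq_mk.mpr (by omega)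
          · exact le_of_lt (h2 ⟨0, by omega⟩ ⟨(y : ℕ) / 2, hyd⟩ (Fin.mk_lt_mk.mpr (by omega)))
        exact le_trans hstep (le_of_lt (h1 ⟨(y : ℕ) / 2, hyd⟩))
  obtain ⟨y, hy⟩ := σ.surjective ⟨0, by omega⟩
  have h1' := hle y
  rw [hy] at h1'
  exact le_antisymm h1' (by simp [Fin.le_def])

lemma phi_zero (m : ℕ) (p : Fin (2 * m + 1)) (e : Perm (Fin (2 * m))) (h : 0 < 2 * (m + 1)) :
    insPerm 0 (insPerm p e) ⟨0, h⟩ = ⟨0, h⟩ := by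
  rw [show (⟨0, h⟩ : Fin (2 * (m + 1))) = (0 : Fin (2 * m + 1 + 1)) from Fin.ext_iff.mpr (by simp)]
  rw [insPerm_zero]

lemma phi_one (m : ℕ) (p : Fin (2 * m + 1)) (e : Perm (Fin (2 * m))) (h : 1 < 2 * (m + 1)) :
    insPerm 0 (insPerm p e) ⟨1, h⟩ = p.succ := by
  rw [show (⟨1, h⟩ : Fin (2 * (m + 1))) = (0 : Fin (2 * m + 1)).succ from Fin.ext_iff.mpr (by simp; exact (Nat.mod_eq_of_lt h).symm)]
  rw [insPerm_succ, Fin.zero_succAbove, insPerm_zero]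

lemma phi_two (m : ℕ) (p : Fin (2 * m + 1)) (e : Perm (Fin (2 * m))) (a : ℕ) (ha : a < 2 * m)
    (h2 : a + 2 < 2 * (m + 1)) :
    insPerm 0 (insPerm p e) ⟨a + 2, h2⟩ = (p.succAbove (e ⟨a, ha⟩)).succ := by
  rw [show (⟨a + 2, h2⟩ : Fin (2 * (m + 1))) = ((⟨a, ha⟩ : Fin (2 * m)).succ).succ from
    Fin.ext_iff.mpr rfl]
  rw [insPerm_succ, Fin.zero_succAbove, insPerm_succ]

lemma Pc_phi_iff (m : ℕ) (p : Fin (2 * m + 1)) (e : Perm (Fin (2 * m))) :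
    Pc (m + 1) (insPerm 0 (insPerm p e)) ↔ Pc m e := by
  constructor
  · rintro ⟨h1, h2⟩
    refine ⟨fun i => ?_, fun i j hij => ?_⟩
    · have hh := h1 ⟨(i : ℕ) + 1, by have := i.isLt; omega⟩
      have e1 : insPerm 0 (insPerm p e)
          (⟨2 * ((i : ℕ) + 1), by have := i.isLt; omega⟩ : Fin (2 * (m + 1)))
          = (p.succAbove (e ⟨2 * (i : ℕ), by have := i.isLt; omega⟩)).succ :=
        phi_two m p e (2 * (i : ℕ)) (by have := i.isLt; omega) (by have := i.isLt; omega)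
      have e2 : insPerm 0 (insPerm p e)
          (⟨2 * ((i : ℕ) + 1) + 1, by have := i.isLt; omega⟩ : Fin (2 * (m + 1)))
          = (p.succAbove (e ⟨2 * (i : ℕ) + 1, by have := i.isLt; omega⟩)).succ :=
        phi_two m p e (2 * (i : ℕ) + 1) (by have := i.isLt; omega) (by have := i.isLt; omega)
      exact Fin.succAbove_lt_succAbove_iff.mp (Fin.succ_lt_succ_iff.mp
        (lt_of_eq_of_lt e1.symm (lt_of_lt_of_eq hh e2)))
    · have hlt : (i : ℕ) < (j : ℕ) := hij
      have hh := h2 ⟨(i : ℕ) + 1, by have := i.isLt; omega⟩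
        ⟨(j : ℕ) + 1, by have := j.isLt; omega⟩ (Fin.mk_lt_mk.mpr (by omega))
      have e1 : insPerm 0 (insPerm p e)
          (⟨2 * ((i : ℕ) + 1), by have := i.isLt; omega⟩ : Fin (2 * (m + 1)))
          = (p.succAbove (e ⟨2 * (i : ℕ), by have := i.isLt; omega⟩)).succ :=
        phi_two m p e (2 * (i : ℕ)) (by have := i.isLt; omega) (by have := i.isLt; omega)
      have e2 : insPerm 0 (insPerm p e)
          (⟨2 * ((j : ℕ) + 1), by have := j.isLt; omega⟩ : Fin (2 * (m + 1)))
          = (p.succAbove (e ⟨2 * (j : ℕ), by have := j.isLt; omega⟩)).succ :=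
        phi_two m p e (2 * (j : ℕ)) (by have := j.isLt; omega) (by have := j.isLt; omega)
      exact Fin.succAbove_lt_succAbove_iff.mp (Fin.succ_lt_succ_iff.mp
        (lt_of_eq_of_lt e1.symm (lt_of_lt_of_eq hh e2)))
  · rintro ⟨h1, h2⟩
    refine ⟨fun i => ?_, fun i j hij => ?_⟩
    · by_cases h0 : (i : ℕ) = 0
      · have g1 : insPerm 0 (insPerm p e)
            (⟨2 * (i : ℕ), by have := i.isLt; omega⟩ : Fin (2 * (m + 1)))
            = ⟨0, by omega⟩ := by
          rw [show (⟨2 * (i : ℕ), by have := i.isLt; omega⟩ : Fin (2 * (m + 1)))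
            = ⟨0, by omega⟩ from Fin.mk_eq_mk.mpr (by omega)]
          exact phi_zero m p e (by omega)
        have g2 : insPerm 0 (insPerm p e)
            (⟨2 * (i : ℕ) + 1, by have := i.isLt; omega⟩ : Fin (2 * (m + 1)))
            = p.succ := by
          rw [show (⟨2 * (i : ℕ) + 1, by have := i.isLt; omega⟩ : Fin (2 * (m + 1)))
            = ⟨1, by omega⟩ from Fin.mk_eq_mk.mpr (by omega)]
          exact phi_one m p e (by omega)
        exact lt_of_eq_of_lt g1 (lt_of_lt_of_eq (by simp [Fin.lt_def]) g2.symm)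
      · have g1 : insPerm 0 (insPerm p e)
            (⟨2 * (i : ℕ), by have := i.isLt; omega⟩ : Fin (2 * (m + 1)))
            = (p.succAbove (e ⟨2 * ((i : ℕ) - 1), by have := i.isLt; omega⟩)).succ := by
          rw [show (⟨2 * (i : ℕ), by have := i.isLt; omega⟩ : Fin (2 * (m + 1)))
            = ⟨2 * ((i : ℕ) - 1) + 2, by have := i.isLt; omega⟩ from Fin.mk_eq_mk.mpr (by omega)]
          exact phi_two m p e _ (by have := i.isLt; omega) (by have := i.isLt; omega)
        have g2 : insPerm 0 (insPerm p e)
            (⟨2 * (i : ℕ) + 1, by have := i.isLt; omega⟩ : Fin (2 * (m + 1)))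
            = (p.succAbove (e ⟨2 * ((i : ℕ) - 1) + 1, by have := i.isLt; omega⟩)).succ := by
          rw [show (⟨2 * (i : ℕ) + 1, by have := i.isLt; omega⟩ : Fin (2 * (m + 1)))
            = ⟨(2 * ((i : ℕ) - 1) + 1) + 2, by have := i.isLt; omega⟩ from
            Fin.mk_eq_mk.mpr (by omega)]
          exact phi_two m p e _ (by have := i.isLt; omega) (by have := i.isLt; omega)
        exact lt_of_eq_of_lt g1 (lt_of_lt_of_eq
          (Fin.succ_lt_succ_iff.mpr (Fin.succAbove_lt_succAbove_iff.mpr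
            (h1 ⟨(i : ℕ) - 1, by have := i.isLt; omega⟩))) g2.symm)
    · have hlt : (i : ℕ) < (j : ℕ) := hij
      have g2 : insPerm 0 (insPerm p e)
          (⟨2 * (j : ℕ), by have := j.isLt; omega⟩ : Fin (2 * (m + 1)))
          = (p.succAbove (e ⟨2 * ((j : ℕ) - 1), by have := j.isLt; omega⟩)).succ := by
        rw [show (⟨2 * (j : ℕ), by have := j.isLt; omega⟩ : Fin (2 * (m + 1)))
          = ⟨2 * ((j : ℕ) - 1) + 2, by have := j.isLt; omega⟩ from Fin.mk_eq_mk.mpr (by omega)]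
        exact phi_two m p e _ (by have := j.isLt; omega) (by have := j.isLt; omega)
      by_cases h0 : (i : ℕ) = 0
      · have g1 : insPerm 0 (insPerm p e)
            (⟨2 * (i : ℕ), by have := i.isLt; omega⟩ : Fin (2 * (m + 1)))
            = ⟨0, by omega⟩ := by
          rw [show (⟨2 * (i : ℕ), by have := i.isLt; omega⟩ : Fin (2 * (m + 1)))
            = ⟨0, by omega⟩ from Fin.mk_eq_mk.mpr (by omega)]
          exact phi_zero m p e (by omega)
        exact lt_of_eq_of_lt g1 (lt_of_lt_of_eq (by simp [Fin.lt_def]) g2.symm)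
      · have g1 : insPerm 0 (insPerm p e)
            (⟨2 * (i : ℕ), by have := i.isLt; omega⟩ : Fin (2 * (m + 1)))
            = (p.succAbove (e ⟨2 * ((i : ℕ) - 1), by have := i.isLt; omega⟩)).succ := by
          rw [show (⟨2 * (i : ℕ), by have := i.isLt; omega⟩ : Fin (2 * (m + 1)))
            = ⟨2 * ((i : ℕ) - 1) + 2, by have := i.isLt; omega⟩ from Fin.mk_eq_mk.mpr (by omega)]
          exact phi_two m p e _ (by have := i.isLt; omega) (by have := i.isLt; omega)
        exact lt_of_eq_of_lt g1 (lt_of_lt_of_eq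
          (Fin.succ_lt_succ_iff.mpr (Fin.succAbove_lt_succAbove_iff.mpr
            (h2 ⟨(i : ℕ) - 1, by have := i.isLt; omega⟩ ⟨(j : ℕ) - 1, by have := j.isLt; omega⟩
              (Fin.mk_lt_mk.mpr (by omega))))) g2.symm)

lemma card_Pc : ∀ m : ℕ,
    (univ.filter (fun σ : Perm (Fin (2 * m)) => Pc m σ)).card = Nat.doubleFactorial (2 * m - 1) := by
  intro m
  induction m with
  | zero =>
    have hall : ∀ σ : Perm (Fin (2 * 0)), Pc 0 σ :=
      fun σ => ⟨fun i => i.elim0, fun i => i.elim0⟩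
    rw [Finset.filter_true_of_mem (fun σ _ => hall σ), Finset.card_univ, Fintype.card_perm,
      Fintype.card_fin]
    decide
  | succ m ih =>
    have key : (univ.filter (fun σ : Perm (Fin (2 * (m + 1))) => Pc (m + 1) σ)).card
        = ((univ : Finset (Fin (2 * m + 1))) ×ˢ
            (univ.filter (fun e : Perm (Fin (2 * m)) => Pc m e))).card := by
      refine Finset.card_bij' (fun σ _ => (extPerm σ 0, extPerm (extPerm σ)))
        (fun pe _ => insPerm 0 (insPerm pe.1 pe.2)) ?_ ?_ ?_ ?_
      · intro σ hσ
        have hP : Pc (m + 1) σ := (Finset.mem_filter.mp hσ).2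
        have h00 : σ (0 : Fin (2 * m + 1 + 1)) = (0 : Fin (2 * m + 1 + 1)) := by
          have hz := Pc_zero hP
          rw [show (0 : Fin (2 * m + 1 + 1)) = ⟨0, by omega⟩ from Fin.ext_iff.mpr (by simp)]
          exact hz
        have hrec : insPerm 0 (insPerm (extPerm σ 0) (extPerm (extPerm σ))) = σ := by
          rw [insPerm_extPerm (extPerm σ), ← h00]
          exact insPerm_extPerm σ
        rw [Finset.mem_product]
        refine ⟨Finset.mem_univ _, Finset.mem_filter.mpr ⟨Finset.mem_univ _, ?_⟩⟩
        exact (Pc_phi_iff m (extPerm σ 0) (extPerm (extPerm σ))).mp (by rw [hrec]; exact hP)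
      · intro pe hpe
        have hP : Pc m pe.2 := (Finset.mem_filter.mp (Finset.mem_product.mp hpe).2).2
        exact Finset.mem_filter.mpr ⟨Finset.mem_univ _, (Pc_phi_iff m pe.1 pe.2).mpr hP⟩
      · intro σ hσ
        have hP : Pc (m + 1) σ := (Finset.mem_filter.mp hσ).2
        have h00 : σ (0 : Fin (2 * m + 1 + 1)) = (0 : Fin (2 * m + 1 + 1)) := by
          have hz := Pc_zero hP
          rw [show (0 : Fin (2 * m + 1 + 1)) = ⟨0, by omega⟩ from Fin.ext_iff.mpr (by simp)]
          exact hz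
        show insPerm 0 (insPerm (extPerm σ 0) (extPerm (extPerm σ))) = σ
        rw [insPerm_extPerm (extPerm σ), ← h00]
        exact insPerm_extPerm σ
      · intro pe hpe
        show (extPerm (insPerm 0 (insPerm pe.1 pe.2)) 0,
          extPerm (extPerm (insPerm 0 (insPerm pe.1 pe.2)))) = pe
        rw [extPerm_insPerm, insPerm_zero, extPerm_insPerm]
    rw [key, Finset.card_product, Finset.card_univ, Fintype.card_fin, ih]
    cases m with
    | zero => decide
    | succ m' =>
      have h1 : 2 * (m' + 2) - 1 = (2 * (m' + 1) - 1) + 2 := by omega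
      rw [h1, Nat.doubleFactorial_add_two]
      congr 1

lemma map_finRange_dite {M : Type*} [One M] (k : ℕ) (g : Fin k → M) :
    (List.finRange k).map g
      = (List.range k).map (fun a => if h : a < k then g ⟨a, h⟩ else 1) := by
  rw [List.finRange_eq_pmap_range, List.map_pmap, List.pmap_eq_map_attach,
    ← List.attach_map_val (l := List.range k) (f := fun a => if h : a < k then g ⟨a, h⟩ else 1)]
  apply List.map_congr_left
  intro x hx
  rw [dif_pos (List.mem_range.mp x.2)]

lemma range_pair_prod {M : Type*} [Monoid M] (F : ℕ → M) : ∀ m : ℕ,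
    ((List.range m).map (fun a => F (2 * a) * F (2 * a + 1))).prod
      = ((List.range (2 * m)).map F).prod := by
  intro m
  induction m with
  | zero => rfl
  | succ m ih =>
    have h2 : 2 * (m + 1) = (2 * m + 1) + 1 := by omega
    rw [h2, List.range_succ, List.range_succ, List.range_succ]
    simp only [List.map_append, List.prod_append, List.map_cons, List.map_nil, List.prod_cons,
      List.prod_nil, ih]
    simp [mul_assoc]

lemma pair_prod (m : ℕ) {M : Type*} [Monoid M] (f : Fin (2 * m) → M) (g : Fin m → M)
    (hg : ∀ i : Fin m, g i = f ⟨2 * (i : ℕ), by have := i.isLt; omega⟩ *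
      f ⟨2 * (i : ℕ) + 1, by have := i.isLt; omega⟩) :
    ((List.finRange m).map g).prod = ((List.finRange (2 * m)).map f).prod := by
  calc ((List.finRange m).map g).prod
      = ((List.range m).map (fun a => if h : a < m then g ⟨a, h⟩ else 1)).prod := by
        rw [map_finRange_dite]
    _ = ((List.range m).map (fun a =>
          (fun b => if h : b < 2 * m then f ⟨b, h⟩ else 1) (2 * a) *
          (fun b => if h : b < 2 * m then f ⟨b, h⟩ else 1) (2 * a + 1))).prod := by
        apply congrArg
        apply List.map_congr_left
        intro a ha
        rw [List.mem_range] at ha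
        simp only
        rw [dif_pos ha, hg ⟨a, ha⟩, dif_pos (show 2 * a < 2 * m by omega),
          dif_pos (show 2 * a + 1 < 2 * m by omega)]
    _ = ((List.range (2 * m)).map (fun b => if h : b < 2 * m then f ⟨b, h⟩ else 1)).prod :=
        range_pair_prod (fun b => if h : b < 2 * m then f ⟨b, h⟩ else 1) m
    _ = ((List.finRange (2 * m)).map f).prod := by rw [map_finRange_dite (2 * m) f]

lemma list_prod_smul {A : Type*} [Ring A] [Algebra ℝ A] {ι : Type*} (r : ι → ℝ) (x : ι → A) :
    ∀ L : List ι, (L.map (fun i => r i • x i)).prod = ((L.map r).prod) • (L.map x).prod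
  | [] => by simp
  | a :: t => by
    simp only [List.map_cons, List.prod_cons, list_prod_smul r x t, smul_mul_smul_comm]

lemma prod_eVec_perm (n : ℕ) (σ : Perm (Fin n)) :
    ((List.finRange n).map (fun j => eVec n (σ j))).prod = (Perm.sign σ : ℤ) • topForm n := by
  have h1 : ((List.finRange n).map (fun j => eVec n (σ j))).prod
      = ExteriorAlgebra.ιMulti ℝ n ((fun j : Fin n => (Pi.single j 1 : Fin n → ℝ)) ∘ σ) := by
    rw [ExteriorAlgebra.ιMulti_apply, List.ofFn_eq_map]
    rfl
  have h2 : ExteriorAlgebra.ιMulti ℝ n (fun j : Fin n => (Pi.single j 1 : Fin n → ℝ))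
      = topForm n := by
    rw [ExteriorAlgebra.ιMulti_apply, List.ofFn_eq_map]
    rfl
  rw [h1, AlternatingMap.map_perm, h2, Units.smul_def]

lemma scalar_prod (k : ℕ) (σ : Perm (Fin (2 * (k + 1))))
    (hσ0 : σ ⟨0, by omega⟩ = ⟨0, by omega⟩) (c lam mu : ℝ) (nu : Fin (2 * (k + 1)) → ℝ)
    (hnu : ∀ i : Fin (2 * (k + 1)), nu i = if (i : ℕ) = 0 then lam else mu)
    (r : Fin (k + 1) → ℝ)
    (hr : ∀ i : Fin (k + 1), r i = c + nu (σ ⟨2 * (i : ℕ), by have := i.isLt; omega⟩) *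
      nu (σ ⟨2 * (i : ℕ) + 1, by have := i.isLt; omega⟩)) :
    ((List.finRange (k + 1)).map r).prod = (c + lam * mu) * (c + mu ^ 2) ^ k := by
  have hne : ∀ (a : ℕ) (pa : a < 2 * (k + 1)), a ≠ 0 → ((σ ⟨a, pa⟩ : Fin (2 * (k + 1))) : ℕ) ≠ 0 := by
    intro a pa ha h0
    have hx : σ ⟨a, pa⟩ = ⟨0, by omega⟩ := Fin.ext_iff.mpr h0
    rw [← hσ0] at hx
    exact ha (Fin.mk_eq_mk.mp (σ.injective hx))
  have hmu : ∀ (a : ℕ) (pa : a < 2 * (k + 1)), a ≠ 0 → nu (σ ⟨a, pa⟩) = mu := by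
    intro a pa ha
    rw [hnu, if_neg (hne a pa ha)]
  have hlam : nu (σ ⟨0, by omega⟩) = lam := by
    rw [hσ0, hnu]
    simp
  calc ((List.finRange (k + 1)).map r).prod
      = ∏ i : Fin (k + 1), r i := (Fin.prod_univ_def r).symm
    _ = r 0 * ∏ i : Fin k, r i.succ := Fin.prod_univ_succ r
    _ = (c + lam * mu) * (c + mu ^ 2) ^ k := by
        have h0 : r 0 = c + lam * mu := by
          rw [hr 0]
          have i1 : σ ⟨2 * ((0 : Fin (k + 1)) : ℕ), by omega⟩ = σ ⟨0, by omega⟩ := rfl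
          have i2 : nu (σ ⟨2 * ((0 : Fin (k + 1)) : ℕ) + 1, by omega⟩) = mu :=
            hmu _ (by omega) (by simp)
          rw [i1, hlam, i2]
        have hs : ∀ i : Fin k, r i.succ = c + mu ^ 2 := by
          intro i
          rw [hr i.succ]
          have a1 : nu (σ ⟨2 * ((i.succ : Fin (k + 1)) : ℕ), by have := (i.succ).isLt; omega⟩) = mu :=
            hmu _ _ (by rw [Fin.val_succ]; omega)
          have a2 : nu (σ ⟨2 * ((i.succ : Fin (k + 1)) : ℕ) + 1, by have := (i.succ).isLt; omega⟩) = mu :=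
            hmu _ _ (by omega)
          rw [a1, a2]
          ring
        rw [h0, Finset.prod_congr rfl (fun i _ => hs i), Finset.prod_const, Finset.card_univ,
          Fintype.card_fin]

end PfAux

open PfAux in
/-- For `n = 2l` and principal curvatures `ν₁ = λ`, `ν₂ = ⋯ = νₙ = μ`, the
Pfaffian of `Ω_{ij} = (c + νᵢνⱼ) eⁱ∧eʲ` equals
`(2l-1)!! (c + λμ)(c + μ²)^{l-1} e¹∧⋯∧eⁿ`. -/
theorem pfaffian_two_curvatures (l : ℕ) (hl : 1 ≤ l) (c lam mu : ℝ)
    (nu : Fin (2 * l) → ℝ) (hnu : ∀ i : Fin (2 * l), nu i = if (i : ℕ) = 0 then lam else mu) :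
    pfaffian l
        (Matrix.of fun i j : Fin (2 * l) =>
          (c + nu i * nu j) • (eVec (2 * l) i * eVec (2 * l) j)) =
      (((Nat.doubleFactorial (2 * l - 1) : ℕ) : ℝ) * (c + lam * mu) * (c + mu ^ 2) ^ (l - 1))
        • topForm (2 * l) := by
  obtain ⟨k, rfl⟩ : ∃ k, l = k + 1 := ⟨l - 1, by omega⟩
  unfold pfaffian
  have hterm : ∀ σ : Perm (Fin (2 * (k + 1))), Pc (k + 1) σ →
      ((Perm.sign σ : ℤ) •
        ((List.finRange (k + 1)).map (fun (i : Fin (k + 1)) =>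
          (Matrix.of fun i j : Fin (2 * (k + 1)) =>
            (c + nu i * nu j) • (eVec (2 * (k + 1)) i * eVec (2 * (k + 1)) j))
          (σ ⟨2 * i, by have := i.isLt; omega⟩)
          (σ ⟨2 * i + 1, by have := i.isLt; omega⟩))).prod)
        = ((c + lam * mu) * (c + mu ^ 2) ^ k) • topForm (2 * (k + 1)) := by
    intro σ hP
    have hσ0 : σ ⟨0, by omega⟩ = ⟨0, by omega⟩ := Pc_zero hP
    have hr : ((List.finRange (k + 1)).map (fun i : Fin (k + 1) =>
        c + nu (σ ⟨2 * i, by have := i.isLt; omega⟩) *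
          nu (σ ⟨2 * i + 1, by have := i.isLt; omega⟩))).prod
        = (c + lam * mu) * (c + mu ^ 2) ^ k :=
      scalar_prod k σ hσ0 c lam mu nu hnu _ (fun i => rfl)
    have hx : ((List.finRange (k + 1)).map (fun i : Fin (k + 1) =>
        eVec (2 * (k + 1)) (σ ⟨2 * i, by have := i.isLt; omega⟩) *
          eVec (2 * (k + 1)) (σ ⟨2 * i + 1, by have := i.isLt; omega⟩))).prod
        = (Perm.sign σ : ℤ) • topForm (2 * (k + 1)) := by
      rw [pair_prod (k + 1) (fun j => eVec (2 * (k + 1)) (σ j)) _ (fun i => rfl),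
        prod_eVec_perm]
    calc (Perm.sign σ : ℤ) •
        ((List.finRange (k + 1)).map (fun (i : Fin (k + 1)) =>
          (Matrix.of fun i j : Fin (2 * (k + 1)) =>
            (c + nu i * nu j) • (eVec (2 * (k + 1)) i * eVec (2 * (k + 1)) j))
          (σ ⟨2 * i, by have := i.isLt; omega⟩)
          (σ ⟨2 * i + 1, by have := i.isLt; omega⟩))).prod
        = (Perm.sign σ : ℤ) •
          ((List.finRange (k + 1)).map (fun i : Fin (k + 1) =>
            (c + nu (σ ⟨2 * i, by have := i.isLt; omega⟩) *
              nu (σ ⟨2 * i + 1, by have := i.isLt; omega⟩)) •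
            (eVec (2 * (k + 1)) (σ ⟨2 * i, by have := i.isLt; omega⟩) *
              eVec (2 * (k + 1)) (σ ⟨2 * i + 1, by have := i.isLt; omega⟩)))).prod := rfl
      _ = (Perm.sign σ : ℤ) •
          (((List.finRange (k + 1)).map (fun i : Fin (k + 1) =>
            c + nu (σ ⟨2 * i, by have := i.isLt; omega⟩) *
              nu (σ ⟨2 * i + 1, by have := i.isLt; omega⟩))).prod •
           ((List.finRange (k + 1)).map (fun i : Fin (k + 1) =>
            eVec (2 * (k + 1)) (σ ⟨2 * i, by have := i.isLt; omega⟩) *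
              eVec (2 * (k + 1)) (σ ⟨2 * i + 1, by have := i.isLt; omega⟩))).prod) := by
          rw [list_prod_smul]
      _ = (Perm.sign σ : ℤ) •
          (((c + lam * mu) * (c + mu ^ 2) ^ k) •
            ((Perm.sign σ : ℤ) • topForm (2 * (k + 1)))) := by
          rw [hr, hx]
      _ = ((c + lam * mu) * (c + mu ^ 2) ^ k) • topForm (2 * (k + 1)) := by
          rw [← Int.cast_smul_eq_zsmul ℝ, ← Int.cast_smul_eq_zsmul ℝ, smul_smul, smul_smul]
          congr 1
          have hs2 : ((Perm.sign σ : ℤ) : ℝ) * ((Perm.sign σ : ℤ) : ℝ) = 1 := by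
            rw [← Int.cast_mul, ← Units.val_mul, Int.units_mul_self, Units.val_one, Int.cast_one]
          rw [mul_comm ((Perm.sign σ : ℤ) : ℝ) _, mul_assoc, hs2, mul_one]
  refine Eq.trans (Finset.sum_congr rfl
    (fun σ hσ => hterm σ (Finset.mem_filter.mp hσ).2)) ?_
  rw [Finset.sum_const, card_Pc (k + 1), ← Nat.cast_smul_eq_nsmul ℝ, smul_smul]
  congr 1
  rw [Nat.add_sub_cancel]
  ring
end

section
/- Let λ be a real number with λ ∉ {0,1,-1} and set λ₁ = λ, λ₂ = (λ-1)/(λ+1), λ₃ = -1/λ₁, λ₄ = -1/λ₂. For each i ∈ {1,2,3,4}, Σ_{j≠i} (1 + λⱼλᵢ)/(λᵢ - λⱼ) = 0. -/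
open Finset

/-- Cartan's fundamental formula with `c = 1`, `g = 4`, multiplicities all `1`:
for `λ ∉ {0, 1, -1}` and `λ₁ = λ`, `λ₂ = (λ-1)/(λ+1)`, `λ₃ = -1/λ₁`, `λ₄ = -1/λ₂`,
for each `i`: `∑_{j ≠ i} (1 + λⱼλᵢ)/(λᵢ - λⱼ) = 0`. -/
theorem cartan_identity_g4 (lam : ℝ) (h0 : lam ≠ 0) (h1 : lam ≠ 1) (h2 : lam ≠ -1)
    (v : Fin 4 → ℝ)
    (hv : v = ![lam, (lam - 1) / (lam + 1), -1 / lam, -1 / ((lam - 1) / (lam + 1))])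
    (hne : ∀ i j : Fin 4, i ≠ j → v i ≠ v j) :
    ∀ i : Fin 4, ∑ j ∈ univ.erase i, (1 + v j * v i) / (v i - v j) = 0 := by
  have hd : ∀ j k : Fin 4, j ≠ k → v j - v k ≠ 0 := fun j k h => sub_ne_zero.mpr (hne j k h)
  have hp : lam + 1 ≠ 0 := fun h => h2 (by linarith)
  have hm : lam - 1 ≠ 0 := sub_ne_zero.mpr h1
  intro i
  rw [sum_erase_eq_sub (mem_univ _), Fin.sum_univ_four]
  fin_cases i
  · have e1 := hd 0 1 (by decide); have e2 := hd 0 2 (by decide); have e3 := hd 0 3 (by decide)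
    rw [hv] at e1 e2 e3 ⊢
    simp only [Matrix.cons_val_zero, Matrix.cons_val_one, Matrix.head_cons,
      Matrix.cons_val_two, Matrix.tail_cons, Matrix.cons_val_three, Fin.zero_eta, Fin.mk_one, Fin.reduceFinMk] at e1 e2 e3 ⊢
    field_simp at e1 e2 e3
    field_simp
    ring
  · have e1 := hd 1 0 (by decide); have e2 := hd 1 2 (by decide); have e3 := hd 1 3 (by decide)
    rw [hv] at e1 e2 e3 ⊢
    simp only [Matrix.cons_val_zero, Matrix.cons_val_one, Matrix.head_cons,
      Matrix.cons_val_two, Matrix.tail_cons, Matrix.cons_val_three, Fin.zero_eta, Fin.mk_one, Fin.reduceFinMk] at e1 e2 e3 ⊢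
    field_simp at e1 e2 e3
    field_simp
    ring_nf
    rw [show (-1 - lam ^ 2) = -(1 + lam ^ 2) by ring, inv_neg]
    ring
  · have e1 := hd 2 0 (by decide); have e2 := hd 2 1 (by decide); have e3 := hd 2 3 (by decide)
    rw [hv] at e1 e2 e3 ⊢
    simp only [Matrix.cons_val_zero, Matrix.cons_val_one, Matrix.head_cons,
      Matrix.cons_val_two, Matrix.tail_cons, Matrix.cons_val_three, Fin.zero_eta, Fin.mk_one, Fin.reduceFinMk] at e1 e2 e3 ⊢
    field_simp at e1 e2 e3
    field_simp
    ring_nf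
    rw [show (-1 - lam ^ 2) = -(1 + lam ^ 2) by ring, inv_neg]
    ring
  · have e1 := hd 3 0 (by decide); have e2 := hd 3 1 (by decide); have e3 := hd 3 2 (by decide)
    rw [hv] at e1 e2 e3 ⊢
    simp only [Matrix.cons_val_zero, Matrix.cons_val_one, Matrix.head_cons,
      Matrix.cons_val_two, Matrix.tail_cons, Matrix.cons_val_three, Fin.zero_eta, Fin.mk_one, Fin.reduceFinMk] at e1 e2 e3 ⊢
    field_simp at e1 e2 e3
    field_simp
    ring
end

section
/- Let λ be a nonzero real number with λ² ≠ 1, and consider the 8-tuple (λ₁,λ₁,λ₂,λ₂,λ₃,λ₃,λ₄,λ₄) with λ₁ = λ, λ₂ = (λ-1)/(λ+1), λ₃ = -1/λ₁, λ₄ = -1/λ₂. Then the elementary symmetric polynomials of this 8-tuple satisfy S₆ = S₂, S₈ = S₀ = 1, and moreover S₂ = (λ⁸ - 24λ⁶ + 62λ⁴ - 24λ² + 1)/(λ²(1-λ²)²) and S₄ = (-2λ⁸ + 62λ⁶ - 152λ⁴ + 62λ² - 2)/(λ²(1-λ²)²). -/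
open Finset

set_option maxRecDepth 100000
set_option maxHeartbeats 1600000

/-- The `k`-th elementary symmetric polynomial of a family `v : Fin n → R`. -/
def esymm {R : Type*} [CommRing R] {n : ℕ} (k : ℕ) (v : Fin n → R) : R :=
  ∑ s ∈ powersetCard k (univ : Finset (Fin n)), ∏ i ∈ s, v i

lemma esymm_aux_2 (a b c d : ℝ) :
    esymm 2 ![a, a, b, b, c, c, d, d] = a ^ 2 + 4 * a * b + 4 * a * c + 4 * a * d + b ^ 2 + 4 * b * c + 4 * b * d + c ^ 2 + 4 * c * d + d ^ 2 := by
  rw [esymm, show powersetCard 2 (univ : Finset (Fin 8)) = {{0,1},{0,2},{0,3},{0,4},{0,5},{0,6},{0,7},{1,2},{1,3},{1,4},{1,5},{1,6},{1,7},{2,3},{2,4},{2,5},{2,6},{2,7},{3,4},{3,5},{3,6},{3,7},{4,5},{4,6},{4,7},{5,6},{5,7},{6,7}} from by decide]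
  simp (config := {decide := true}) only [Finset.sum_insert, Finset.prod_insert,
    Finset.mem_insert, Finset.mem_singleton, Finset.sum_singleton, Finset.prod_singleton,
    show (![a, a, b, b, c, c, d, d] : Fin 8 → ℝ) 0 = a from rfl,
    show (![a, a, b, b, c, c, d, d] : Fin 8 → ℝ) 1 = a from rfl,
    show (![a, a, b, b, c, c, d, d] : Fin 8 → ℝ) 2 = b from rfl,
    show (![a, a, b, b, c, c, d, d] : Fin 8 → ℝ) 3 = b from rfl,
    show (![a, a, b, b, c, c, d, d] : Fin 8 → ℝ) 4 = c from rfl,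
    show (![a, a, b, b, c, c, d, d] : Fin 8 → ℝ) 5 = c from rfl,
    show (![a, a, b, b, c, c, d, d] : Fin 8 → ℝ) 6 = d from rfl,
    show (![a, a, b, b, c, c, d, d] : Fin 8 → ℝ) 7 = d from rfl,
    not_false_iff]
  ring

lemma esymm_aux_4 (a b c d : ℝ) :
    esymm 4 ![a, a, b, b, c, c, d, d] = a ^ 2 * b ^ 2 + 4 * a ^ 2 * b * c + 4 * a ^ 2 * b * d + a ^ 2 * c ^ 2 + 4 * a ^ 2 * c * d + a ^ 2 * d ^ 2 + 4 * a * b ^ 2 * c + 4 * a * b ^ 2 * d + 4 * a * b * c ^ 2 + 16 * a * b * c * d + 4 * a * b * d ^ 2 + 4 * a * c ^ 2 * d + 4 * a * c * d ^ 2 + b ^ 2 * c ^ 2 + 4 * b ^ 2 * c * d + b ^ 2 * d ^ 2 + 4 * b * c ^ 2 * d + 4 * b * c * d ^ 2 + c ^ 2 * d ^ 2 := by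
  rw [esymm, show powersetCard 4 (univ : Finset (Fin 8)) = {{0,1,2,3},{0,1,2,4},{0,1,2,5},{0,1,2,6},{0,1,2,7},{0,1,3,4},{0,1,3,5},{0,1,3,6},{0,1,3,7},{0,1,4,5},{0,1,4,6},{0,1,4,7},{0,1,5,6},{0,1,5,7},{0,1,6,7},{0,2,3,4},{0,2,3,5},{0,2,3,6},{0,2,3,7},{0,2,4,5},{0,2,4,6},{0,2,4,7},{0,2,5,6},{0,2,5,7},{0,2,6,7},{0,3,4,5},{0,3,4,6},{0,3,4,7},{0,3,5,6},{0,3,5,7},{0,3,6,7},{0,4,5,6},{0,4,5,7},{0,4,6,7},{0,5,6,7},{1,2,3,4},{1,2,3,5},{1,2,3,6},{1,2,3,7},{1,2,4,5},{1,2,4,6},{1,2,4,7},{1,2,5,6},{1,2,5,7},{1,2,6,7},{1,3,4,5},{1,3,4,6},{1,3,4,7},{1,3,5,6},{1,3,5,7},{1,3,6,7},{1,4,5,6},{1,4,5,7},{1,4,6,7},{1,5,6,7},{2,3,4,5},{2,3,4,6},{2,3,4,7},{2,3,5,6},{2,3,5,7},{2,3,6,7},{2,4,5,6},{2,4,5,7},{2,4,6,7},{2,5,6,7},{3,4,5,6},{3,4,5,7},{3,4,6,7},{3,5,6,7},{4,5,6,7}}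 from by decide]
  simp (config := {decide := true}) only [Finset.sum_insert, Finset.prod_insert,
    Finset.mem_insert, Finset.mem_singleton, Finset.sum_singleton, Finset.prod_singleton,
    show (![a, a, b, b, c, c, d, d] : Fin 8 → ℝ) 0 = a from rfl,
    show (![a, a, b, b, c, c, d, d] : Fin 8 → ℝ) 1 = a from rfl,
    show (![a, a, b, b, c, c, d, d] : Fin 8 → ℝ) 2 = b from rfl,
    show (![a, a, b, b, c, c, d, d] : Fin 8 → ℝ) 3 = b from rfl,
    show (![a, a, b, b, c, c, d, d] : Fin 8 → ℝ) 4 = c from rfl,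
    show (![a, a, b, b, c, c, d, d] : Fin 8 → ℝ) 5 = c from rfl,
    show (![a, a, b, b, c, c, d, d] : Fin 8 → ℝ) 6 = d from rfl,
    show (![a, a, b, b, c, c, d, d] : Fin 8 → ℝ) 7 = d from rfl,
    not_false_iff]
  ring

lemma esymm_aux_6 (a b c d : ℝ) :
    esymm 6 ![a, a, b, b, c, c, d, d] = a ^ 2 * b ^ 2 * c ^ 2 + 4 * a ^ 2 * b ^ 2 * c * d + a ^ 2 * b ^ 2 * d ^ 2 + 4 * a ^ 2 * b * c ^ 2 * d + 4 * a ^ 2 * b * c * d ^ 2 + a ^ 2 * c ^ 2 * d ^ 2 + 4 * a * b ^ 2 * c ^ 2 * d + 4 * a * b ^ 2 * c * d ^ 2 + 4 * a * b * c ^ 2 * d ^ 2 + b ^ 2 * c ^ 2 * d ^ 2 := by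
  rw [esymm, show powersetCard 6 (univ : Finset (Fin 8)) = {{0,1,2,3,4,5},{0,1,2,3,4,6},{0,1,2,3,4,7},{0,1,2,3,5,6},{0,1,2,3,5,7},{0,1,2,3,6,7},{0,1,2,4,5,6},{0,1,2,4,5,7},{0,1,2,4,6,7},{0,1,2,5,6,7},{0,1,3,4,5,6},{0,1,3,4,5,7},{0,1,3,4,6,7},{0,1,3,5,6,7},{0,1,4,5,6,7},{0,2,3,4,5,6},{0,2,3,4,5,7},{0,2,3,4,6,7},{0,2,3,5,6,7},{0,2,4,5,6,7},{0,3,4,5,6,7},{1,2,3,4,5,6},{1,2,3,4,5,7},{1,2,3,4,6,7},{1,2,3,5,6,7},{1,2,4,5,6,7},{1,3,4,5,6,7},{2,3,4,5,6,7}} from by decide]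
  simp (config := {decide := true}) only [Finset.sum_insert, Finset.prod_insert,
    Finset.mem_insert, Finset.mem_singleton, Finset.sum_singleton, Finset.prod_singleton,
    show (![a, a, b, b, c, c, d, d] : Fin 8 → ℝ) 0 = a from rfl,
    show (![a, a, b, b, c, c, d, d] : Fin 8 → ℝ) 1 = a from rfl,
    show (![a, a, b, b, c, c, d, d] : Fin 8 → ℝ) 2 = b from rfl,
    show (![a, a, b, b, c, c, d, d] : Fin 8 → ℝ) 3 = b from rfl,
    show (![a, a, b, b, c, c, d, d] : Fin 8 → ℝ) 4 = c from rfl,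
    show (![a, a, b, b, c, c, d, d] : Fin 8 → ℝ) 5 = c from rfl,
    show (![a, a, b, b, c, c, d, d] : Fin 8 → ℝ) 6 = d from rfl,
    show (![a, a, b, b, c, c, d, d] : Fin 8 → ℝ) 7 = d from rfl,
    not_false_iff]
  ring

lemma esymm_aux_8 (a b c d : ℝ) :
    esymm 8 ![a, a, b, b, c, c, d, d] = a ^ 2 * b ^ 2 * c ^ 2 * d ^ 2 := by
  rw [esymm, show powersetCard 8 (univ : Finset (Fin 8)) = {{0,1,2,3,4,5,6,7}} from by decide]
  simp (config := {decide := true}) only [Finset.sum_insert, Finset.prod_insert,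
    Finset.mem_insert, Finset.mem_singleton, Finset.sum_singleton, Finset.prod_singleton,
    show (![a, a, b, b, c, c, d, d] : Fin 8 → ℝ) 0 = a from rfl,
    show (![a, a, b, b, c, c, d, d] : Fin 8 → ℝ) 1 = a from rfl,
    show (![a, a, b, b, c, c, d, d] : Fin 8 → ℝ) 2 = b from rfl,
    show (![a, a, b, b, c, c, d, d] : Fin 8 → ℝ) 3 = b from rfl,
    show (![a, a, b, b, c, c, d, d] : Fin 8 → ℝ) 4 = c from rfl,
    show (![a, a, b, b, c, c, d, d] : Fin 8 → ℝ) 5 = c from rfl,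
    show (![a, a, b, b, c, c, d, d] : Fin 8 → ℝ) 6 = d from rfl,
    show (![a, a, b, b, c, c, d, d] : Fin 8 → ℝ) 7 = d from rfl,
    not_false_iff]
  ring

lemma esymm_aux_0 (v : Fin 8 → ℝ) : esymm 0 v = 1 := by
  simp [esymm]

/-- Principal curvatures of the isoparametric hypersurface in `S⁹` with `g = 4`,
`m₁ = m₂ = 2`: for the 8-tuple `(λ₁,λ₁,λ₂,λ₂,λ₃,λ₃,λ₄,λ₄)` with `λ₁ = λ`,
`λ₂ = (λ-1)/(λ+1)`, `λ₃ = -1/λ₁`, `λ₄ = -1/λ₂`, one has `S₆ = S₂`, `S₈ = S₀ = 1`,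
`S₂ = (λ⁸-24λ⁶+62λ⁴-24λ²+1)/(λ²(1-λ²)²)` and
`S₄ = (-2λ⁸+62λ⁶-152λ⁴+62λ²-2)/(λ²(1-λ²)²)`. -/
theorem esymm_g4_mult_two (lam : ℝ) (h0 : lam ≠ 0) (h1 : lam ^ 2 ≠ 1)
    (l1 l2 l3 l4 : ℝ) (e1 : l1 = lam) (e2 : l2 = (lam - 1) / (lam + 1))
    (e3 : l3 = -1 / l1) (e4 : l4 = -1 / l2)
    (v : Fin 8 → ℝ) (hv : v = ![l1, l1, l2, l2, l3, l3, l4, l4]) :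
    esymm 6 v = esymm 2 v ∧
    esymm 8 v = 1 ∧ esymm 0 v = 1 ∧
    esymm 2 v = (lam ^ 8 - 24 * lam ^ 6 + 62 * lam ^ 4 - 24 * lam ^ 2 + 1) /
      (lam ^ 2 * (1 - lam ^ 2) ^ 2) ∧
    esymm 4 v = (-2 * lam ^ 8 + 62 * lam ^ 6 - 152 * lam ^ 4 + 62 * lam ^ 2 - 2) /
      (lam ^ 2 * (1 - lam ^ 2) ^ 2) := by
  have hp : lam + 1 ≠ 0 := fun h => h1 (by nlinarith)
  have hm : lam - 1 ≠ 0 := fun h => h1 (by nlinarith)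
  have hq : 1 - lam ^ 2 ≠ 0 := fun h => h1 (by linarith)
  have hl2 : l2 ≠ 0 := by rw [e2]; exact div_ne_zero hm hp
  have e3' : l3 = -1 / lam := by rw [e3, e1]
  have e4' : l4 = -(lam + 1) / (lam - 1) := by
    rw [e4, e2]
    field_simp
  rw [hv, esymm_aux_2, esymm_aux_4, esymm_aux_6, esymm_aux_8, esymm_aux_0,
    e1, e2, e3', e4']
  refine ⟨?_, ?_, rfl, ?_, ?_⟩ <;>
  · field_simp
    all_goals ring
end

section
/- Let λ be a real number with λ(3λ²-1)(λ²-3) ≠ 0 and (√3 λ + 1) ≠ 0 ≠ (1 - √3 λ). Set λ₂ = (λ - √3)/(√3 λ + 1) and λ₃ = (λ + √3)/(1 - √3 λ), and consider the 6-tuple (λ,λ,λ₂,λ₂,λ₃,λ₃). Then the elementary symmetric polynomials satisfy 15·S₀ + 3·S₂ + 3·S₄ + 15·S₆ = 24(1+λ²)³/(1-3λ²)². -/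
open Finset

lemma fin6 : ∀ a b c d e f : ℝ, (![a,b,c,d,e,f] 0 = a ∧ ![a,b,c,d,e,f] 1 = b ∧ ![a,b,c,d,e,f] 2 = c
  ∧ ![a,b,c,d,e,f] 3 = d ∧ ![a,b,c,d,e,f] 4 = e ∧ ![a,b,c,d,e,f] 5 = f) := by
  intros; refine ⟨rfl, rfl, rfl, rfl, rfl, rfl⟩

lemma esymm0 (a b c d e f : ℝ) : esymm 0 ![a,b,c,d,e,f] = 1 := by
  rw [esymm, show powersetCard 0 (univ : Finset (Fin 6)) = {∅} from by decide]
  simp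

set_option maxHeartbeats 2000000 in
lemma esymm2 (a b c d e f : ℝ) : esymm 2 ![a,b,c,d,e,f] =
    a*b+a*c+a*d+a*e+a*f+b*c+b*d+b*e+b*f+c*d+c*e+c*f+d*e+d*f+e*f := by
  rw [esymm, show powersetCard 2 (univ : Finset (Fin 6)) =
    {{0,1},{0,2},{0,3},{0,4},{0,5},{1,2},{1,3},{1,4},{1,5},{2,3},{2,4},{2,5},{3,4},{3,5},{4,5}} from by decide]
  simp (config := { decide := true }) only [Finset.sum_insert, Finset.sum_singleton,
    Finset.prod_insert, Finset.prod_singleton, Finset.mem_insert, Finset.mem_singleton,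
    (fin6 a b c d e f).1, (fin6 a b c d e f).2.1, (fin6 a b c d e f).2.2.1,
    (fin6 a b c d e f).2.2.2.1, (fin6 a b c d e f).2.2.2.2.1, (fin6 a b c d e f).2.2.2.2.2]
  ring

set_option maxHeartbeats 2000000 in
lemma esymm4 (a b c d e f : ℝ) : esymm 4 ![a,b,c,d,e,f] =
    a*b*c*d+a*b*c*e+a*b*c*f+a*b*d*e+a*b*d*f+a*b*e*f+a*c*d*e+a*c*d*f+a*c*e*f+a*d*e*f
    +b*c*d*e+b*c*d*f+b*c*e*f+b*d*e*f+c*d*e*f := by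
  rw [esymm, show powersetCard 4 (univ : Finset (Fin 6)) =
    {{0,1,2,3},{0,1,2,4},{0,1,2,5},{0,1,3,4},{0,1,3,5},{0,1,4,5},{0,2,3,4},{0,2,3,5},{0,2,4,5},{0,3,4,5},
     {1,2,3,4},{1,2,3,5},{1,2,4,5},{1,3,4,5},{2,3,4,5}} from by decide]
  simp (config := { decide := true }) only [Finset.sum_insert, Finset.sum_singleton,
    Finset.prod_insert, Finset.prod_singleton, Finset.mem_insert, Finset.mem_singleton,
    (fin6 a b c d e f).1, (fin6 a b c d e f).2.1, (fin6 a b c d e f).2.2.1,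
    (fin6 a b c d e f).2.2.2.1, (fin6 a b c d e f).2.2.2.2.1, (fin6 a b c d e f).2.2.2.2.2]
  ring

lemma esymm6 (a b c d e f : ℝ) : esymm 6 ![a,b,c,d,e,f] = a*b*c*d*e*f := by
  rw [esymm, show powersetCard 6 (univ : Finset (Fin 6)) = {univ} from by decide]
  rw [Finset.sum_singleton, Fin.prod_univ_six]
  simp only [(fin6 a b c d e f).1, (fin6 a b c d e f).2.1, (fin6 a b c d e f).2.2.1,
    (fin6 a b c d e f).2.2.2.1, (fin6 a b c d e f).2.2.2.2.1, (fin6 a b c d e f).2.2.2.2.2]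

set_option maxHeartbeats 1000000 in

/-- Gauss–Bonnet–Chern integrand of Cartan's isoparametric hypersurface `M_{(3,2)} ⊂ S⁷`:
for the 6-tuple `(λ,λ,λ₂,λ₂,λ₃,λ₃)` with `λ₂ = (λ-√3)/(√3λ+1)`, `λ₃ = (λ+√3)/(1-√3λ)`,
`15 S₀ + 3 S₂ + 3 S₄ + 15 S₆ = 24(1+λ²)³/(1-3λ²)²`. -/
theorem esymm_g3_mult_two (lam : ℝ)
    (h0 : lam * (3 * lam ^ 2 - 1) * (lam ^ 2 - 3) ≠ 0)
    (hd1 : Real.sqrt 3 * lam + 1 ≠ 0) (hd2 : 1 - Real.sqrt 3 * lam ≠ 0)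
    (l2 l3 : ℝ) (e2 : l2 = (lam - Real.sqrt 3) / (Real.sqrt 3 * lam + 1))
    (e3 : l3 = (lam + Real.sqrt 3) / (1 - Real.sqrt 3 * lam))
    (v : Fin 6 → ℝ) (hv : v = ![lam, lam, l2, l2, l3, l3]) :
    15 * esymm 0 v + 3 * esymm 2 v + 3 * esymm 4 v + 15 * esymm 6 v =
      24 * (1 + lam ^ 2) ^ 3 / (1 - 3 * lam ^ 2) ^ 2 := by
  have hs : Real.sqrt 3 ^ 2 = 3 := Real.sq_sqrt (by norm_num)
  have hden : (1 - 3 * lam ^ 2) ≠ 0 := by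
    intro h; apply h0
    have : (3 : ℝ) * lam ^ 2 - 1 = 0 := by linarith
    rw [this]; ring
  have h2 : l2 * (Real.sqrt 3 * lam + 1) = lam - Real.sqrt 3 := by
    rw [e2]; exact div_mul_cancel₀ _ hd1
  have h3 : l3 * (1 - Real.sqrt 3 * lam) = lam + Real.sqrt 3 := by
    rw [e3]; exact div_mul_cancel₀ _ hd2
  have hp : (l2 + l3) * (1 - 3 * lam ^ 2) = 8 * lam := by
    linear_combination (1 - Real.sqrt 3 * lam) * h2 + (Real.sqrt 3 * lam + 1) * h3 +
      ((l2 + l3) * lam ^ 2 + 2 * lam) * hs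
  have hq : (l2 * l3) * (1 - 3 * lam ^ 2) = lam ^ 2 - 3 := by
    linear_combination ((1 - Real.sqrt 3 * lam) * l3) * h2 + (lam - Real.sqrt 3) * h3 +
      (l2 * l3 * lam ^ 2 - 1) * hs
  subst hv
  rw [esymm0, esymm2, esymm4, esymm6, eq_div_iff (pow_ne_zero 2 hden)]
  linear_combination
    (12 * lam * (1 - 3 * lam ^ 2) + 3 * (1 + lam ^ 2) * ((l2 + l3) * (1 - 3 * lam ^ 2) + 8 * lam)
      + 12 * lam * (l2 * l3 * (1 - 3 * lam ^ 2))) * hp +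
    (6 * (1 + lam ^ 2) * (1 - 3 * lam ^ 2)
      + 3 * (1 + 5 * lam ^ 2) * (l2 * l3 * (1 - 3 * lam ^ 2) + lam ^ 2 - 3) + 96 * lam ^ 2) * hq
end
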